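/- arXiv:1107.2490 — 7 statements merged into one kernel-verified Lean document; each statement's English description precedes it below -/
import Mathlib

section
/- Let x be a random vector in ℝ^n with ‖x‖² ≤ M almost surely, suppose A = E(x·xᵀ) is positive definite with smallest eigenvalue λ0 > 0. Then for every vector v ∈ ℝ^n: E(‖(x·xᵀ − A)·v‖_{A⁻¹}²) ≤ (M/λ0)·‖v‖_A². -/
open Matrix MeasureTheory

lemma dot_key' {n : ℕ} (B : Matrix (Fin n) (Fin n) ℝ) (a b : Fin n → ℝ) :
    (B *ᵥ a) ⬝ᵥ b = a ⬝ᵥ (Bᵀ *ᵥ b) := by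
  rw [dotProduct_mulVec, vecMul_transpose]

lemma inv_quad_bound' {n : ℕ} {A : Matrix (Fin n) (Fin n) ℝ} (hApd : A.PosDef)
    {lam0 : ℝ} (hlam0 : 0 < lam0)
    (hlo : ∀ v : Fin n → ℝ, lam0 * (v ⬝ᵥ v) ≤ v ⬝ᵥ A *ᵥ v) (w : Fin n → ℝ) :
    w ⬝ᵥ A⁻¹ *ᵥ w ≤ lam0⁻¹ * (w ⬝ᵥ w) := by
  have hAs : Aᵀ = A := hApd.1
  have hdet : IsUnit A.det := hApd.det_pos.ne'.isUnit
  obtain ⟨u, hu⟩ : ∃ u, A⁻¹ *ᵥ w = u := ⟨_, rfl⟩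
  have hw : A *ᵥ u = w := by
    rw [← hu, mulVec_mulVec, Matrix.mul_nonsing_inv A hdet, one_mulVec]
  obtain ⟨S, hS2, hSs⟩ : ∃ S : Matrix (Fin n) (Fin n) ℝ, S * S = A ∧ Sᵀ = S := by
    open scoped MatrixOrder in
    exact ⟨CFC.sqrt A, CFC.sqrt_mul_sqrt_self A hApd.posSemidef.nonneg, (CFC.sqrt_nonneg A).posSemidef.1⟩
  have hSAS : S * A * S = A * A := by rw [← hS2]; simp only [Matrix.mul_assoc]
  have h1 : (S *ᵥ u) ⬝ᵥ (S *ᵥ u) = u ⬝ᵥ A *ᵥ u := by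
    rw [dot_key', hSs, mulVec_mulVec, hS2]
  have h2 : (S *ᵥ u) ⬝ᵥ A *ᵥ (S *ᵥ u) = (A *ᵥ u) ⬝ᵥ (A *ᵥ u) := by
    have e1 : (S *ᵥ u) ⬝ᵥ A *ᵥ (S *ᵥ u) = u ⬝ᵥ (S * A * S) *ᵥ u := by
      rw [dot_key', hSs, mulVec_mulVec, mulVec_mulVec]
    have e2 : (A *ᵥ u) ⬝ᵥ (A *ᵥ u) = u ⬝ᵥ (A * A) *ᵥ u := by
      rw [dot_key', hAs, mulVec_mulVec]
    rw [e1, e2, hSAS]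
  have key : lam0 * (u ⬝ᵥ A *ᵥ u) ≤ (A *ᵥ u) ⬝ᵥ (A *ᵥ u) := by
    calc lam0 * (u ⬝ᵥ A *ᵥ u) = lam0 * ((S *ᵥ u) ⬝ᵥ (S *ᵥ u)) := by rw [h1]
      _ ≤ (S *ᵥ u) ⬝ᵥ A *ᵥ (S *ᵥ u) := hlo _
      _ = (A *ᵥ u) ⬝ᵥ (A *ᵥ u) := h2
  have hwu : w ⬝ᵥ A⁻¹ *ᵥ w = u ⬝ᵥ A *ᵥ u := by
    rw [hu, ← hw, dot_key', hAs]
  rw [hwu, ← hw, le_inv_mul_iff₀ hlam0]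
  exact key

/-- For a random vector `x` with `‖x‖² ≤ M` a.s. and `A = E(x xᵀ)` positive definite
with smallest eigenvalue `λ0 > 0`, for every `v`:
`E(‖(x xᵀ - A)v‖_{A⁻¹}²) ≤ (M/λ0) ‖v‖_A²`. -/
theorem xi2_second_moment_bound {n : ℕ}
    {Ω : Type*} [MeasurableSpace Ω] (μ : Measure Ω) [IsProbabilityMeasure μ]
    (x : Ω → Fin n → ℝ) (hxm : Measurable x)
    (M : ℝ) (hM : ∀ᵐ ω ∂μ, x ω ⬝ᵥ x ω ≤ M)
    (A : Matrix (Fin n) (Fin n) ℝ)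
    (hA : ∀ i j, A i j = ∫ ω, x ω i * x ω j ∂μ)
    (hApd : A.PosDef)
    (lam0 : ℝ) (hlam0 : 0 < lam0)
    (hlo : ∀ v : Fin n → ℝ, lam0 * (v ⬝ᵥ v) ≤ v ⬝ᵥ A *ᵥ v) :
    ∀ v : Fin n → ℝ,
      ∫ ω, ((vecMulVec (x ω) (x ω) - A) *ᵥ v) ⬝ᵥ
          (A⁻¹ *ᵥ ((vecMulVec (x ω) (x ω) - A) *ᵥ v)) ∂μ
        ≤ (M / lam0) * (v ⬝ᵥ A *ᵥ v) := by
  intro v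
  have hAs : Aᵀ = A := hApd.1
  -- measurability of coordinates
  have hxi : ∀ i, Measurable fun ω => x ω i := fun i => (measurable_pi_apply i).comp hxm
  -- integrability of products of coordinates
  have hxij : ∀ i j, Integrable (fun ω => x ω i * x ω j) μ := by
    intro i j
    refine Integrable.mono' (integrable_const M) ((hxi i).mul (hxi j)).aestronglyMeasurable ?_
    filter_upwards [hM] with ω hω
    have h1 : x ω i * x ω i ≤ x ω ⬝ᵥ x ω :=
      Finset.single_le_sum (f := fun k => x ω k * x ω k)
        (fun k _ => mul_self_nonneg _) (Finset.mem_univ i)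
    have h2 : x ω j * x ω j ≤ x ω ⬝ᵥ x ω :=
      Finset.single_le_sum (f := fun k => x ω k * x ω k)
        (fun k _ => mul_self_nonneg _) (Finset.mem_univ j)
    have habs : |x ω i * x ω j| ≤ (x ω i * x ω i + x ω j * x ω j) / 2 := by
      rw [abs_mul]
      nlinarith [sq_nonneg (|x ω i| - |x ω j|), sq_abs (x ω i), sq_abs (x ω j),
        abs_nonneg (x ω i), abs_nonneg (x ω j)]
    rw [Real.norm_eq_abs]
    linarith
  -- integral of (x⬝a)(x⬝b) equals a ⬝ A b
  have hprod : ∀ a b : Fin n → ℝ,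
      Integrable (fun ω => (x ω ⬝ᵥ a) * (x ω ⬝ᵥ b)) μ ∧
      ∫ ω, (x ω ⬝ᵥ a) * (x ω ⬝ᵥ b) ∂μ = a ⬝ᵥ A *ᵥ b := by
    intro a b
    have hrw : ∀ ω, (x ω ⬝ᵥ a) * (x ω ⬝ᵥ b)
        = ∑ i, ∑ j, a i * b j * (x ω i * x ω j) := by
      intro ω
      rw [dotProduct, dotProduct, Finset.sum_mul_sum]
      refine Finset.sum_congr rfl fun i _ => Finset.sum_congr rfl fun j _ => by ring
    have hint : Integrable (fun ω => ∑ i, ∑ j, a i * b j * (x ω i * x ω j)) μ :=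
      integrable_finset_sum _ fun i _ =>
        integrable_finset_sum _ fun j _ => (hxij i j).const_mul _
    refine ⟨hint.congr (Filter.Eventually.of_forall fun ω => (hrw ω).symm), ?_⟩
    calc ∫ ω, (x ω ⬝ᵥ a) * (x ω ⬝ᵥ b) ∂μ
        = ∫ ω, ∑ i, ∑ j, a i * b j * (x ω i * x ω j) ∂μ := by
          exact integral_congr_ae (Filter.Eventually.of_forall hrw)
      _ = ∑ i, ∑ j, a i * b j * (A i j) := by
          rw [integral_finset_sum _ fun i _ =>
            integrable_finset_sum _ fun j _ => (hxij i j).const_mul _]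
          refine Finset.sum_congr rfl fun i _ => ?_
          rw [integral_finset_sum _ fun j _ => (hxij i j).const_mul _]
          exact Finset.sum_congr rfl fun j _ => by rw [integral_const_mul, hA i j]
      _ = a ⬝ᵥ A *ᵥ b := by
          rw [dotProduct]
          refine Finset.sum_congr rfl fun i _ => ?_
          rw [mulVec, dotProduct, Finset.mul_sum]
          exact Finset.sum_congr rfl fun j _ => by ring
  set w : Fin n → ℝ := A *ᵥ v with hwdef
  -- rewrite of the noise vector
  have hz : ∀ ω, (vecMulVec (x ω) (x ω) - A) *ᵥ v = (x ω ⬝ᵥ v) • x ω - w := by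
    intro ω
    rw [sub_mulVec]
    congr 1
    funext i
    simp only [mulVec, vecMulVec_apply, dotProduct, Pi.smul_apply, smul_eq_mul,
      Finset.mul_sum]
    rw [Finset.sum_mul]
    exact Finset.sum_congr rfl fun j _ => by ring
  -- quadratic expansion of ‖z‖²
  have hzz : ∀ ω, ((x ω ⬝ᵥ v) • x ω - w) ⬝ᵥ ((x ω ⬝ᵥ v) • x ω - w)
      = (x ω ⬝ᵥ v) * (x ω ⬝ᵥ v) * (x ω ⬝ᵥ x ω)
        - 2 * ((x ω ⬝ᵥ v) * (x ω ⬝ᵥ w)) + w ⬝ᵥ w := by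
    intro ω
    have hc : w ⬝ᵥ x ω = x ω ⬝ᵥ w := dotProduct_comm _ _
    simp only [sub_dotProduct, dotProduct_sub, smul_dotProduct, dotProduct_smul,
      smul_eq_mul, hc]
    ring
  set g : Ω → ℝ := fun ω => lam0⁻¹ *
    (M * ((x ω ⬝ᵥ v) * (x ω ⬝ᵥ v)) - 2 * ((x ω ⬝ᵥ v) * (x ω ⬝ᵥ w)) + w ⬝ᵥ w)
    with hgdef
  have hg_int : Integrable g μ := by
    refine Integrable.const_mul ?_ _
    exact (((hprod v v).1.const_mul M).sub ((hprod v w).1.const_mul 2)).add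
      (integrable_const _)
  -- a.e. pointwise bound
  have hfg : ∀ᵐ ω ∂μ, ((vecMulVec (x ω) (x ω) - A) *ᵥ v) ⬝ᵥ
      (A⁻¹ *ᵥ ((vecMulVec (x ω) (x ω) - A) *ᵥ v)) ≤ g ω := by
    filter_upwards [hM] with ω hω
    have step1 := inv_quad_bound' hApd hlam0 hlo ((vecMulVec (x ω) (x ω) - A) *ᵥ v)
    have hp : (0:ℝ) ≤ (x ω ⬝ᵥ v) * (x ω ⬝ᵥ v) := mul_self_nonneg _
    have step2 : ((vecMulVec (x ω) (x ω) - A) *ᵥ v) ⬝ᵥ ((vecMulVec (x ω) (x ω) - A) *ᵥ v)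
        ≤ M * ((x ω ⬝ᵥ v) * (x ω ⬝ᵥ v)) - 2 * ((x ω ⬝ᵥ v) * (x ω ⬝ᵥ w)) + w ⬝ᵥ w := by
      rw [hz ω, hzz ω]
      nlinarith [mul_le_mul_of_nonneg_left hω hp]
    calc ((vecMulVec (x ω) (x ω) - A) *ᵥ v) ⬝ᵥ
          (A⁻¹ *ᵥ ((vecMulVec (x ω) (x ω) - A) *ᵥ v))
        ≤ lam0⁻¹ * (((vecMulVec (x ω) (x ω) - A) *ᵥ v) ⬝ᵥ
            ((vecMulVec (x ω) (x ω) - A) *ᵥ v)) := step1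
      _ ≤ g ω := by
          rw [hgdef]
          exact mul_le_mul_of_nonneg_left step2 (inv_nonneg.mpr hlam0.le)
  -- nonnegativity of the integrand
  have hf_nonneg : ∀ᵐ ω ∂μ, (0:ℝ) ≤ ((vecMulVec (x ω) (x ω) - A) *ᵥ v) ⬝ᵥ
      (A⁻¹ *ᵥ ((vecMulVec (x ω) (x ω) - A) *ᵥ v)) := by
    refine Filter.Eventually.of_forall fun ω => ?_
    simpa using hApd.inv.posSemidef.dotProduct_mulVec_nonneg ((vecMulVec (x ω) (x ω) - A) *ᵥ v)
  have hmono := integral_mono_of_nonneg hf_nonneg hg_int hfg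
  -- compute ∫ g
  have hvw : v ⬝ᵥ A *ᵥ w = w ⬝ᵥ w := by
    rw [hwdef, dot_key' A v (A *ᵥ v), hAs]
  have hg_eq : ∫ ω, g ω ∂μ = lam0⁻¹ * (M * (v ⬝ᵥ A *ᵥ v) - (w ⬝ᵥ w)) := by
    have i1 : Integrable (fun ω => M * ((x ω ⬝ᵥ v) * (x ω ⬝ᵥ v))) μ :=
      (hprod v v).1.const_mul M
    have i2 : Integrable (fun ω => 2 * ((x ω ⬝ᵥ v) * (x ω ⬝ᵥ w))) μ :=
      (hprod v w).1.const_mul 2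
    have i12 : Integrable
        (fun ω => M * ((x ω ⬝ᵥ v) * (x ω ⬝ᵥ v)) - 2 * ((x ω ⬝ᵥ v) * (x ω ⬝ᵥ w))) μ :=
      i1.sub i2
    rw [hgdef]
    simp only
    rw [integral_const_mul, integral_add i12 (integrable_const _),
      integral_sub i1 i2, integral_const_mul, integral_const_mul,
      (hprod v v).2, (hprod v w).2, integral_const, hvw]
    simp only [measure_univ, probReal_univ, ENNReal.toReal_one, smul_eq_mul, one_mul]
    ring
  have hww : (0:ℝ) ≤ w ⬝ᵥ w := by
    exact Finset.sum_nonneg fun i _ => mul_self_nonneg _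
  have hvAv : (0:ℝ) ≤ v ⬝ᵥ A *ᵥ v := by
    have h1 := hlo v
    have h0 : (0:ℝ) ≤ v ⬝ᵥ v := Finset.sum_nonneg fun i _ => mul_self_nonneg _
    nlinarith
  calc ∫ ω, ((vecMulVec (x ω) (x ω) - A) *ᵥ v) ⬝ᵥ
        (A⁻¹ *ᵥ ((vecMulVec (x ω) (x ω) - A) *ᵥ v)) ∂μ
      ≤ ∫ ω, g ω ∂μ := hmono
    _ = lam0⁻¹ * (M * (v ⬝ᵥ A *ᵥ v) - (w ⬝ᵥ w)) := hg_eq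
    _ ≤ lam0⁻¹ * (M * (v ⬝ᵥ A *ᵥ v)) := by
        apply mul_le_mul_of_nonneg_left _ (inv_nonneg.mpr hlam0.le)
        linarith
    _ = (M / lam0) * (v ⬝ᵥ A *ᵥ v) := by ring
end

section
/- Let x be a random vector in ℝ^n with ‖x‖² ≤ M almost surely, and suppose A = E(x·xᵀ) is positive definite with smallest eigenvalue λ0 > 0. Then E(x·xᵀ·A⁻¹·x·xᵀ) ≼ (M/λ0)·A in the Loewner (positive semidefinite) order, i.e., (M/λ0)·A − E(x·xᵀ·A⁻¹·x·xᵀ) is positive semidefinite. -/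
open Matrix MeasureTheory

private lemma entry_eq' {n : ℕ} (a : Fin n → ℝ) (B : Matrix (Fin n) (Fin n) ℝ) (i j : Fin n) :
    (vecMulVec a a * B * vecMulVec a a) i j = a i * a j * (a ⬝ᵥ B *ᵥ a) := by
  simp only [mul_apply, vecMulVec_apply, dotProduct, mulVec, Finset.mul_sum, Finset.sum_mul]
  rw [Finset.sum_comm]
  refine Finset.sum_congr rfl fun l _ => Finset.sum_congr rfl fun k _ => by ring

private lemma cs' {n : ℕ} (a b : Fin n → ℝ) : (a ⬝ᵥ b)^2 ≤ (a ⬝ᵥ a) * (b ⬝ᵥ b) := by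
  simpa [dotProduct, sq] using Finset.sum_mul_sq_le_sq_mul_sq Finset.univ a b

private lemma qbound' {n : ℕ} {A : Matrix (Fin n) (Fin n) ℝ} (hApd : A.PosDef)
    {lam0 : ℝ} (hlam0 : 0 < lam0)
    (hlo : ∀ v : Fin n → ℝ, lam0 * (v ⬝ᵥ v) ≤ v ⬝ᵥ A *ᵥ v)
    {M : ℝ} (a : Fin n → ℝ) (haM : a ⬝ᵥ a ≤ M) :
    0 ≤ a ⬝ᵥ A⁻¹ *ᵥ a ∧ a ⬝ᵥ A⁻¹ *ᵥ a ≤ M / lam0 := by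
  set w := A⁻¹ *ᵥ a with hw
  have hAw : A *ᵥ w = a := by
    rw [hw, mulVec_mulVec, Matrix.mul_nonsing_inv A
      (isUnit_iff_ne_zero.mpr hApd.det_pos.ne'), one_mulVec]
  have hww : (0:ℝ) ≤ w ⬝ᵥ w := Finset.sum_nonneg fun i _ => mul_self_nonneg _
  have hS0 : (0:ℝ) ≤ a ⬝ᵥ a := Finset.sum_nonneg fun i _ => mul_self_nonneg _
  have hM0 : 0 ≤ M := le_trans hS0 haM
  have h1 : lam0 * (w ⬝ᵥ w) ≤ a ⬝ᵥ w := by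
    have h := hlo w
    rw [hAw] at h
    rwa [dotProduct_comm a w]
  have hq0 : 0 ≤ a ⬝ᵥ w := le_trans (mul_nonneg hlam0.le hww) h1
  have hcs := cs' a w
  refine ⟨hq0, ?_⟩
  rcases eq_or_lt_of_le hq0 with h | h
  · rw [le_div_iff₀ hlam0, ← h, zero_mul]; exact hM0
  · rw [le_div_iff₀ hlam0]
    have key : lam0 * (a ⬝ᵥ w)^2 ≤ M * (a ⬝ᵥ w) := by
      nlinarith [mul_le_mul_of_nonneg_left hcs hlam0.le,
        mul_le_mul_of_nonneg_left h1 hS0, mul_le_mul_of_nonneg_right haM hq0]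
    nlinarith [key, h]

/-- Fourth-moment matrix inequality: for a random vector `x` with `‖x‖² ≤ M` a.s.
and `A = E(x xᵀ)` positive definite with smallest eigenvalue `λ0 > 0`,
`E(x xᵀ A⁻¹ x xᵀ) ≼ (M/λ0) A` in the Loewner order. -/
theorem fourth_moment_loewner_bound {n : ℕ}
    {Ω : Type*} [MeasurableSpace Ω] (μ : Measure Ω) [IsProbabilityMeasure μ]
    (x : Ω → Fin n → ℝ) (hxm : Measurable x)
    (M : ℝ) (hM : ∀ᵐ ω ∂μ, x ω ⬝ᵥ x ω ≤ M)
    (A : Matrix (Fin n) (Fin n) ℝ)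
    (hA : ∀ i j, A i j = ∫ ω, x ω i * x ω j ∂μ)
    (hApd : A.PosDef)
    (lam0 : ℝ) (hlam0 : 0 < lam0)
    (hlo : ∀ v : Fin n → ℝ, lam0 * (v ⬝ᵥ v) ≤ v ⬝ᵥ A *ᵥ v) :
    (((M / lam0) • A) - Matrix.of (fun i j =>
        ∫ ω, (vecMulVec (x ω) (x ω) * A⁻¹ * vecMulVec (x ω) (x ω)) i j ∂μ)).PosSemidef := by
  set c := M / lam0 with hc
  set q : Ω → ℝ := fun ω => x ω ⬝ᵥ A⁻¹ *ᵥ x ω with hqdef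
  have hxi : ∀ i, Measurable fun ω => x ω i := fun i => (measurable_pi_apply i).comp hxm
  have hqm : Measurable q := by
    simp only [hqdef, dotProduct, mulVec]
    exact Finset.measurable_sum _ fun i _ =>
      (hxi i).mul (Finset.measurable_sum _ fun j _ => measurable_const.mul (hxi j))
  have hxx0 : ∀ ω, (0:ℝ) ≤ x ω ⬝ᵥ x ω := fun ω => Finset.sum_nonneg fun i _ => mul_self_nonneg _
  have hM0 : 0 ≤ M := by
    obtain ⟨ω, hω⟩ := hM.exists
    exact le_trans (hxx0 ω) hω
  have hc0 : 0 ≤ c := div_nonneg hM0 hlam0.le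
  have hqb : ∀ᵐ ω ∂μ, 0 ≤ q ω ∧ q ω ≤ c := by
    filter_upwards [hM] with ω hω
    exact qbound' hApd hlam0 hlo (x ω) hω
  have hsq : ∀ ω i, x ω i * x ω i ≤ x ω ⬝ᵥ x ω := fun ω i =>
    Finset.single_le_sum (f := fun k => x ω k * x ω k)
      (fun k _ => mul_self_nonneg _) (Finset.mem_univ i)
  have habs : ∀ ω i j, |x ω i * x ω j| ≤ x ω ⬝ᵥ x ω := by
    intro ω i j
    rw [abs_le]
    constructor <;> nlinarith [hsq ω i, hsq ω j, sq_nonneg (x ω i + x ω j),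
      sq_nonneg (x ω i - x ω j)]
  -- integrability helper
  have hIbd : ∀ (g : Ω → ℝ) (C : ℝ), Measurable g → (∀ᵐ ω ∂μ, ‖g ω‖ ≤ C) → Integrable g μ :=
    fun g C hg hb => ⟨hg.aestronglyMeasurable, HasFiniteIntegral.of_bounded hb⟩
  have hint : ∀ (f : Ω → ℝ) (Cf : ℝ), Measurable f → (∀ᵐ ω ∂μ, 0 ≤ f ω ∧ f ω ≤ Cf) →
      ∀ i j, Integrable (fun ω => x ω i * x ω j * f ω) μ := by
    intro f Cf hfm hfb i j
    refine hIbd _ (M * Cf) (((hxi i).mul (hxi j)).mul hfm) ?_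
    filter_upwards [hM, hfb] with ω hω ⟨hf0, hfC⟩
    rw [Real.norm_eq_abs, abs_mul]
    have h1 : |x ω i * x ω j| ≤ M := le_trans (habs ω i j) hω
    have h2 : |f ω| ≤ Cf := by rwa [abs_of_nonneg hf0]
    have hCf0 : 0 ≤ Cf := le_trans hf0 hfC
    exact mul_le_mul h1 h2 (abs_nonneg _) hM0
  have hone : ∀ᵐ ω ∂μ, (0:ℝ) ≤ (1:ℝ) ∧ (1:ℝ) ≤ (1:ℝ) := ae_of_all _ fun ω => ⟨zero_le_one, le_refl 1⟩
  have hint1 := hint (fun _ => 1) 1 measurable_const hone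
  have hintq := hint q c hqm hqb
  -- key quadratic form computation
  have key : ∀ (f : Ω → ℝ), (∀ i j, Integrable (fun ω => x ω i * x ω j * f ω) μ) →
      ∀ v : Fin n → ℝ, v ⬝ᵥ ((Matrix.of fun i j => ∫ ω, x ω i * x ω j * f ω ∂μ) *ᵥ v)
        = ∫ ω, (x ω ⬝ᵥ v)^2 * f ω ∂μ := by
    intro f hf v
    simp only [dotProduct, mulVec, of_apply]
    have step1 : ∀ i : Fin n,
        v i * ∑ j, (∫ ω, x ω i * x ω j * f ω ∂μ) * v j
          = ∫ ω, v i * ∑ j, (x ω i * x ω j * f ω) * v j ∂μ := by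
      intro i
      rw [integral_const_mul]
      congr 1
      rw [integral_finset_sum _ (fun j _ => (hf i j).mul_const (v j))]
      exact Finset.sum_congr rfl fun j _ => (integral_mul_const _ _).symm
    rw [Finset.sum_congr rfl fun i _ => step1 i]
    rw [← integral_finset_sum _ (fun i _ =>
      ((integrable_finset_sum _ (fun j _ => (hf i j).mul_const (v j))).const_mul (v i)))]
    refine integral_congr_ae (ae_of_all _ fun ω => ?_)
    dsimp only
    rw [sq, Finset.sum_mul_sum, Finset.sum_mul]
    refine Finset.sum_congr rfl fun i _ => ?_
    rw [Finset.mul_sum, Finset.sum_mul]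
    exact Finset.sum_congr rfl fun j _ => by ring
  -- rewrite the matrices
  have hEeq : (Matrix.of fun i j =>
        ∫ ω, (vecMulVec (x ω) (x ω) * A⁻¹ * vecMulVec (x ω) (x ω)) i j ∂μ)
      = Matrix.of fun i j => ∫ ω, x ω i * x ω j * q ω ∂μ := by
    ext i j
    simp only [of_apply]
    congr 1
    funext ω
    exact entry_eq' (x ω) A⁻¹ i j
  have hAeq : A = Matrix.of fun i j => ∫ ω, x ω i * x ω j * (1:ℝ) ∂μ := by
    ext i j
    simp only [of_apply, mul_one]
    exact hA i j
  rw [hEeq]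
  refine Matrix.PosSemidef.of_dotProduct_mulVec_nonneg ?_ ?_
  · -- Hermitian
    show _ᴴ = _
    ext i j
    simp only [conjTranspose_apply, Matrix.sub_apply, Matrix.smul_apply, of_apply, star_trivial,
      smul_eq_mul]
    have h1 : A j i = A i j := by
      rw [hA, hA]
      congr 1; funext ω; ring
    have h2 : (∫ ω, x ω j * x ω i * q ω ∂μ) = ∫ ω, x ω i * x ω j * q ω ∂μ := by
      congr 1; funext ω; ring
    rw [h1, h2]
  · intro v
    have hstar : star v = v := by
      funext i; simp
    rw [hstar, sub_mulVec, dotProduct_sub, smul_mulVec, dotProduct_smul, smul_eq_mul]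
    have hA' : v ⬝ᵥ A *ᵥ v = ∫ ω, (x ω ⬝ᵥ v)^2 * 1 ∂μ := by
      rw [hAeq]; exact key _ hint1 v
    have hE' := key q hintq v
    rw [hA', hE']
    have hsm : Measurable fun ω => x ω ⬝ᵥ v := by
      simp only [dotProduct]
      exact Finset.measurable_sum _ fun i _ => (hxi i).mul measurable_const
    have hintS : Integrable (fun ω => (x ω ⬝ᵥ v)^2 * 1) μ := by
      refine hIbd _ (M * (v ⬝ᵥ v)) ?_ ?_
      · exact (hsm.pow_const 2).mul measurable_const
      · filter_upwards [hM] with ω hω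
        rw [mul_one, Real.norm_eq_abs, abs_of_nonneg (sq_nonneg _)]
        calc (x ω ⬝ᵥ v)^2 ≤ (x ω ⬝ᵥ x ω) * (v ⬝ᵥ v) := cs' _ _
          _ ≤ M * (v ⬝ᵥ v) := by
            apply mul_le_mul_of_nonneg_right hω
            exact Finset.sum_nonneg fun i _ => mul_self_nonneg _
    have hintSq : Integrable (fun ω => (x ω ⬝ᵥ v)^2 * q ω) μ := by
      refine hIbd _ (M * (v ⬝ᵥ v) * c) ?_ ?_
      · exact (hsm.pow_const 2).mul hqm
      · filter_upwards [hM, hqb] with ω hω ⟨hq0, hqc⟩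
        rw [Real.norm_eq_abs, abs_mul, abs_of_nonneg (sq_nonneg _), abs_of_nonneg hq0]
        have hvv : (0:ℝ) ≤ v ⬝ᵥ v := Finset.sum_nonneg fun i _ => mul_self_nonneg _
        have h1 : (x ω ⬝ᵥ v)^2 ≤ M * (v ⬝ᵥ v) :=
          le_trans (cs' _ _) (mul_le_mul_of_nonneg_right hω hvv)
        exact mul_le_mul h1 hqc hq0 (mul_nonneg hM0 hvv)
    rw [← integral_const_mul, ← integral_sub (hintS.const_mul c) hintSq]
    refine integral_nonneg_of_ae ?_
    filter_upwards [hqb] with ω ⟨hq0, hqc⟩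
    have h0 := sq_nonneg (x ω ⬝ᵥ v)
    have := mul_nonneg (sub_nonneg.mpr hqc) h0
    simp only [Pi.zero_apply, mul_one]
    nlinarith [this]
end

section
/- Let γ_t = γ0·(1 + a·γ0·t)^{−c} with γ0 > 0, a > 0, 0 ≤ c ≤ 1, let 0 < λ0 ≤ λ1 with γ0·λ1 ≤ 1 and (2c−1)·a < λ0, and set κ = 1 − max(0, 2c−1)·a/λ0. Then for every integer k ≥ 1: (1/γ_{k+1} − 1/γ_k)·(1/γ_{k+1}) ≤ (1/γ_k − 1/γ_{k−1})·(1/γ_k)·(1 − λ0·γ_k)^{κ−1}. -/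
open Real intervalIntegral


lemma incr_le (c h u : ℝ) (hc0 : 0 < c) (hc1 : c ≤ 1) (hh : 0 < h) (hu : 0 < u) :
    (u + 2*h) ^ c - (u + h) ^ c ≤
      (u + 2*h) ^ (c - 1) * (u + h) ^ (1 - c) * ((u + h) ^ c - u ^ c) := by
  have hv : 0 < u + h := by linarith
  have hw : 0 < u + 2*h := by linarith
  set K : ℝ := (u + 2*h) ^ (c - 1) * (u + h) ^ (1 - c) with hK
  have hnot : (0:ℝ) ∉ Set.uIcc u (u + h) := by
    rw [Set.uIcc_of_le (by linarith)]
    intro hmem; exact absurd hmem.1 (by linarith)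
  have hnot' : (0:ℝ) ∉ Set.uIcc (u + h) (u + 2*h) := by
    rw [Set.uIcc_of_le (by linarith)]
    intro hmem; exact absurd hmem.1 (by linarith)
  have hint1 : IntervalIntegrable (fun t : ℝ => t ^ (c - 1)) MeasureTheory.volume u (u + h) :=
    intervalIntegrable_rpow (Or.inr hnot)
  have hint2 : IntervalIntegrable (fun t : ℝ => (t + h) ^ (c - 1)) MeasureTheory.volume u (u + h) := by
    have := (intervalIntegrable_rpow (μ := MeasureTheory.volume)
      (r := c - 1) (a := u + h) (b := u + 2*h) (Or.inr hnot')).comp_add_right h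
    rw [show u + h - h = u by ring, show u + 2*h - h = u + h by ring] at this
    exact this
  have hI1 : ∫ t in u..(u + h), t ^ (c - 1) = ((u + h) ^ c - u ^ c) / c := by
    rw [integral_rpow (Or.inr ⟨by intro hc; simp at hc; linarith, hnot⟩)]
    ring_nf
  have hI2 : ∫ t in u..(u + h), (t + h) ^ (c - 1) = ((u + 2*h) ^ c - (u + h) ^ c) / c := by
    rw [integral_comp_add_right (fun t => t ^ (c - 1)) h,
      show u + h + h = u + 2*h by ring,
      integral_rpow (Or.inr ⟨by intro hc; simp at hc; linarith, hnot'⟩)]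
    ring_nf
  have eK : K = ((u + 2*h) / (u + h)) ^ (c - 1) := by
    rw [div_rpow hw.le hv.le, div_eq_mul_inv, ← Real.rpow_neg hv.le, neg_sub]
  have hmono : ∫ t in u..(u + h), (t + h) ^ (c - 1) ≤ ∫ t in u..(u + h), K * t ^ (c - 1) := by
    apply integral_mono_on (by linarith) hint2 (hint1.const_mul K)
    intro t ht
    have ht0 : 0 < t := lt_of_lt_of_le hu ht.1
    have hth : 0 < t + h := by linarith
    have key : ((t + h) / t) ^ (c - 1) ≤ ((u + 2*h) / (u + h)) ^ (c - 1) := by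
      apply rpow_le_rpow_of_nonpos (by positivity) ?_ (by linarith)
      rw [div_le_div_iff₀ hv ht0]
      nlinarith [ht.2]
    have e1 : ((t + h) / t) ^ (c - 1) = (t + h) ^ (c - 1) * (t ^ (c - 1))⁻¹ := by
      rw [div_rpow hth.le ht0.le, div_eq_mul_inv]
    rw [e1, ← eK] at key
    have htc : 0 < t ^ (c - 1) := rpow_pos_of_pos ht0 _
    calc (t + h) ^ (c - 1) = (t + h) ^ (c - 1) * (t ^ (c - 1))⁻¹ * t ^ (c - 1) := by
          field_simp
      _ ≤ K * t ^ (c - 1) := by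
          exact mul_le_mul_of_nonneg_right key htc.le
  rw [hI2, integral_const_mul, hI1] at hmono
  calc (u + 2*h) ^ c - (u + h) ^ c = c * (((u + 2*h) ^ c - (u + h) ^ c) / c) := by
        field_simp
    _ ≤ c * (K * (((u + h) ^ c - u ^ c) / c)) := by
        exact mul_le_mul_of_nonneg_left hmono hc0.le
    _ = K * ((u + h) ^ c - u ^ c) := by field_simp

lemma incr_mul_le (c h u : ℝ) (hc0 : 0 < c) (hc1 : c ≤ 1) (hh : 0 < h) (hu : 0 < u) :
    ((u + 2*h) ^ c - (u + h) ^ c) * (u + 2*h) ^ c ≤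
      (u + 2*h) ^ (2*c - 1) * ((u + h) ^ (1 - c) * ((u + h) ^ c - u ^ c)) := by
  have hw : 0 < u + 2*h := by linarith
  have e : (u + 2*h) ^ (c - 1) * (u + h) ^ (1 - c) * ((u + h) ^ c - u ^ c) * (u + 2*h) ^ c
      = (u + 2*h) ^ (2*c - 1) * ((u + h) ^ (1 - c) * ((u + h) ^ c - u ^ c)) := by
    rw [show (2*c - 1 : ℝ) = (c - 1) + c by ring, Real.rpow_add hw]
    ring
  rw [← e]
  exact mul_le_mul_of_nonneg_right (incr_le c h u hc0 hc1 hh hu) (Real.rpow_pos_of_pos hw c).le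

-- core scalar inequality in both cases
lemma core_half (c h u : ℝ) (hc0 : 0 < c) (hc : c ≤ 1/2) (hh : 0 < h) (hu : 1 ≤ u)
    (incr : ((u + 2*h) ^ c - (u + h) ^ c) * (u + 2*h) ^ c ≤
      (u + 2*h) ^ (2*c - 1) * ((u + h) ^ (1 - c) * ((u + h) ^ c - u ^ c))) :
    ((u + 2*h) ^ c - (u + h) ^ c) * (u + 2*h) ^ c ≤
      ((u + h) ^ c - u ^ c) * (u + h) ^ c := by
  have hu0 : (0:ℝ) < u := by linarith
  have hv : 0 < u + h := by linarith
  have hA : 0 ≤ (u + h) ^ c - u ^ c :=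
    sub_nonneg.2 (rpow_le_rpow hu0.le (by linarith) hc0.le)
  have h1 : (u + 2*h) ^ (2*c - 1) ≤ (u + h) ^ (2*c - 1) :=
    rpow_le_rpow_of_nonpos hv (by linarith) (by linarith)
  have h2 : (u + h) ^ (2*c - 1) * (u + h) ^ (1 - c) = (u + h) ^ c := by
    rw [← Real.rpow_add hv]; ring_nf
  calc ((u + 2*h) ^ c - (u + h) ^ c) * (u + 2*h) ^ c
      ≤ (u + 2*h) ^ (2*c - 1) * ((u + h) ^ (1 - c) * ((u + h) ^ c - u ^ c)) := incr
    _ ≤ (u + h) ^ (2*c - 1) * ((u + h) ^ (1 - c) * ((u + h) ^ c - u ^ c)) := by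
        apply mul_le_mul_of_nonneg_right h1
        exact mul_nonneg (rpow_pos_of_pos hv _).le hA
    _ = ((u + h) ^ c - u ^ c) * (u + h) ^ c := by rw [← mul_assoc, h2]; ring

lemma core_big (c h u : ℝ) (hc : 1/2 < c) (hc1 : c ≤ 1) (hh : 0 < h) (hu : 1 ≤ u)
    (incr : ((u + 2*h) ^ c - (u + h) ^ c) * (u + 2*h) ^ c ≤
      (u + 2*h) ^ (2*c - 1) * ((u + h) ^ (1 - c) * ((u + h) ^ c - u ^ c))) :
    ((u + 2*h) ^ c - (u + h) ^ c) * (u + 2*h) ^ c ≤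
      ((u + h) ^ c - u ^ c) * ((u + h) ^ c + (2*c - 1) * h) := by
  have hu0 : (0:ℝ) < u := by linarith
  have hv : 0 < u + h := by linarith
  have hw : 0 < u + 2*h := by linarith
  have hA : 0 ≤ (u + h) ^ c - u ^ c :=
    sub_nonneg.2 (rpow_le_rpow hu0.le (by linarith) (by linarith))
  -- AM-GM
  have amgm : (u + 2*h) ^ (2*c - 1) * (u + h) ^ (2 - 2*c) ≤
      (2*c - 1) * (u + 2*h) + (2 - 2*c) * (u + h) :=
    Real.geom_mean_le_arith_mean2_weighted (by linarith) (by linarith) hw.le hv.le (by ring)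
  have key : (u + 2*h) ^ (2*c - 1) * (u + h) ^ (1 - c) ≤ (u + h) ^ c + (2*c - 1) * h := by
    have e1 : (u + h) ^ (1 - c) = (u + h) ^ (2 - 2*c) * (u + h) ^ (c - 1) := by
      rw [← Real.rpow_add hv]; ring_nf
    have hvc1 : (u + h) ^ (c - 1) ≤ 1 :=
      rpow_le_one_of_one_le_of_nonpos (by linarith) (by linarith)
    have hvc1' : 0 < (u + h) ^ (c - 1) := rpow_pos_of_pos hv _
    have e2 : (u + h) * (u + h) ^ (c - 1) = (u + h) ^ c := by
      nth_rewrite 1 [← Real.rpow_one (u + h)]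
      rw [← Real.rpow_add hv]; ring_nf
    calc (u + 2*h) ^ (2*c - 1) * (u + h) ^ (1 - c)
        = ((u + 2*h) ^ (2*c - 1) * (u + h) ^ (2 - 2*c)) * (u + h) ^ (c - 1) := by
          rw [e1]; ring
      _ ≤ ((2*c - 1) * (u + 2*h) + (2 - 2*c) * (u + h)) * (u + h) ^ (c - 1) :=
          mul_le_mul_of_nonneg_right amgm hvc1'.le
      _ = ((u + h) + (2*c - 1) * h) * (u + h) ^ (c - 1) := by ring_nf
      _ = (u + h) ^ c + (2*c - 1) * h * (u + h) ^ (c - 1) := by rw [add_mul, e2]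
      _ ≤ (u + h) ^ c + (2*c - 1) * h := by
          have := mul_le_mul_of_nonneg_left hvc1 (show (0:ℝ) ≤ (2*c - 1) * h by nlinarith)
          nlinarith [this]
  calc ((u + 2*h) ^ c - (u + h) ^ c) * (u + 2*h) ^ c
      ≤ (u + 2*h) ^ (2*c - 1) * ((u + h) ^ (1 - c) * ((u + h) ^ c - u ^ c)) := incr
    _ = ((u + 2*h) ^ (2*c - 1) * (u + h) ^ (1 - c)) * ((u + h) ^ c - u ^ c) := by ring
    _ ≤ ((u + h) ^ c + (2*c - 1) * h) * ((u + h) ^ c - u ^ c) :=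
          mul_le_mul_of_nonneg_right key hA
    _ = ((u + h) ^ c - u ^ c) * ((u + h) ^ c + (2*c - 1) * h) := by ring

-- (1-x)^(-s) ≥ 1 + s x
lemma rpow_neg_lower (x s : ℝ) (hx0 : 0 < x) (hx1 : x < 1) (hs : 0 ≤ s) :
    1 + s * x ≤ (1 - x) ^ (-s) := by
  have h1x : 0 < 1 - x := by linarith
  rw [rpow_def_of_pos h1x]
  have hlog : Real.log (1 - x) ≤ -x := by
    have := Real.log_le_sub_one_of_pos h1x; linarith
  have h2 : 1 + s * x ≤ 1 + Real.log (1 - x) * (-s) := by nlinarith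
  calc 1 + s * x ≤ Real.log (1 - x) * (-s) + 1 := by linarith
    _ ≤ Real.exp (Real.log (1 - x) * (-s)) := Real.add_one_le_exp _


set_option maxHeartbeats 1000000 in
/-- Key learning-rate increment lemma: for `γ_t = γ0 (1 + a γ0 t)^(-c)` and
`κ = 1 - max(0, 2c-1) a / λ0`, consecutive increments of `1/γ` satisfy
`(1/γ_{k+1} - 1/γ_k)(1/γ_{k+1}) ≤ (1/γ_k - 1/γ_{k-1})(1/γ_k)(1 - λ0 γ_k)^{κ-1}`. -/
theorem learning_rate_increment_lemma
    (γ0 a c lam0 lam1 : ℝ) (hγ0 : 0 < γ0) (ha : 0 < a)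
    (hc0 : 0 ≤ c) (hc1 : c ≤ 1) (hlam0 : 0 < lam0) (hlam : lam0 ≤ lam1)
    (hgl : γ0 * lam1 ≤ 1) (hca : (2 * c - 1) * a < lam0)
    (κ : ℝ) (hκ : κ = 1 - max 0 (2 * c - 1) * a / lam0)
    (γ : ℕ → ℝ) (hγ : ∀ t : ℕ, γ t = γ0 * (1 + a * γ0 * t) ^ (-c)) :
    ∀ k : ℕ, 1 ≤ k →
      (1 / γ (k + 1) - 1 / γ k) * (1 / γ (k + 1)) ≤
        (1 / γ k - 1 / γ (k - 1)) * (1 / γ k) * (1 - lam0 * γ k) ^ (κ - 1) := by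
  intro k hk
  rcases eq_or_lt_of_le hc0 with hc | hc
  · -- c = 0 : γ is constant
    have hγ' : ∀ t : ℕ, γ t = γ0 := by
      intro t; rw [hγ t, ← hc, neg_zero, Real.rpow_zero, mul_one]
    rw [hγ' (k+1), hγ' k, hγ' (k-1)]
    simp
  -- now 0 < c
  set h : ℝ := a * γ0 with hhdef
  have hh : 0 < h := by positivity
  have hk1 : (1:ℝ) ≤ (k:ℝ) := by exact_mod_cast hk
  set u : ℝ := 1 + h * ((k:ℝ) - 1) with hudef
  have hu : 1 ≤ u := by
    have : 0 ≤ h * ((k:ℝ) - 1) := mul_nonneg hh.le (by linarith)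
    rw [hudef]; linarith
  have hu0 : 0 < u := by linarith
  have hv : 0 < u + h := by linarith
  have hv1 : 1 < u + h := by linarith
  have hw : 0 < u + 2*h := by linarith
  -- rewrite the three γ values
  have ekm : ((k - 1 : ℕ) : ℝ) = (k:ℝ) - 1 := by
    have : (1:ℕ) ≤ k := hk
    push_cast [this]; ring
  have e1 : 1 + a * γ0 * ((k - 1 : ℕ) : ℝ) = u := by rw [ekm, hudef, hhdef]
  have e2 : 1 + a * γ0 * (k : ℝ) = u + h := by rw [hudef, hhdef]; ring
  have e3 : 1 + a * γ0 * ((k + 1 : ℕ) : ℝ) = u + 2*h := by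
    push_cast; rw [hudef, hhdef]; ring
  have inv_form : ∀ x : ℝ, 0 < x → 1 / (γ0 * x ^ (-c)) = γ0⁻¹ * x ^ c := by
    intro x hx
    rw [Real.rpow_neg hx.le, one_div, mul_inv, inv_inv]
  have g1 : 1 / γ (k - 1) = γ0⁻¹ * u ^ c := by rw [hγ, e1, inv_form u hu0]
  have g2 : 1 / γ k = γ0⁻¹ * (u + h) ^ c := by rw [hγ, e2, inv_form (u+h) hv]
  have g3 : 1 / γ (k + 1) = γ0⁻¹ * (u + 2*h) ^ c := by rw [hγ, e3, inv_form (u+2*h) hw]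
  have gk : γ k = γ0 * (u + h) ^ (-c) := by rw [hγ, e2]
  rw [g1, g2, g3, gk]
  have incr := incr_mul_le c h u hc hc1 hh hu0
  have hA : 0 ≤ (u + h) ^ c - u ^ c :=
    sub_nonneg.2 (rpow_le_rpow hu0.le (by linarith) hc0)
  -- core inequality
  have core : ((u + 2*h) ^ c - (u + h) ^ c) * (u + 2*h) ^ c ≤
      ((u + h) ^ c - u ^ c) * ((u + h) ^ c * (1 - lam0 * (γ0 * (u + h) ^ (-c))) ^ (κ - 1)) := by
    rcases le_or_gt c (1/2) with hch | hch
    · -- small c : κ = 1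
      have hmax : max 0 (2*c - 1) = 0 := max_eq_left (by linarith)
      have hκ1 : κ - 1 = 0 := by rw [hκ, hmax]; ring
      rw [hκ1, Real.rpow_zero, mul_one]
      exact core_half c h u hc hch hh hu incr
    · -- large c
      have hmax : max 0 (2*c - 1) = 2*c - 1 := max_eq_right (by linarith)
      have hκ1 : κ - 1 = -((2*c - 1) * a / lam0) := by rw [hκ, hmax]; ring
      set x : ℝ := lam0 * (γ0 * (u + h) ^ (-c)) with hxdef
      have hp : 0 < (u + h) ^ (-c) := rpow_pos_of_pos hv _
      have hp1 : (u + h) ^ (-c) < 1 :=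
        rpow_lt_one_of_one_lt_of_neg hv1 (by linarith)
      have hx0 : 0 < x := by positivity
      have hx1 : x < 1 := by
        have hl : lam0 * γ0 ≤ 1 := by
          calc lam0 * γ0 ≤ lam1 * γ0 := mul_le_mul_of_nonneg_right hlam hγ0.le
            _ = γ0 * lam1 := by ring
            _ ≤ 1 := hgl
        have hxle : x ≤ (u + h) ^ (-c) := by
          rw [hxdef, ← mul_assoc]
          calc lam0 * γ0 * (u + h) ^ (-c) ≤ 1 * (u + h) ^ (-c) :=
                mul_le_mul_of_nonneg_right hl hp.le
            _ = (u + h) ^ (-c) := one_mul _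
        linarith
      have hs : 0 ≤ (2*c - 1) * a / lam0 := div_nonneg (mul_nonneg (by linarith) ha.le) hlam0.le
      have hF : 1 + ((2*c - 1) * a / lam0) * x ≤ (1 - x) ^ (κ - 1) := by
        rw [hκ1]; exact rpow_neg_lower x _ hx0 hx1 hs
      have hsx : ((2*c - 1) * a / lam0) * x = (2*c - 1) * h * (u + h) ^ (-c) := by
        rw [hxdef, hhdef]; field_simp
      have hvv : (u + h) ^ c * (u + h) ^ (-c) = 1 := by
        rw [← Real.rpow_add hv]; simp
      have hVF : (u + h) ^ c + (2*c - 1) * h ≤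
          (u + h) ^ c * (1 - x) ^ (κ - 1) := by
        have hVpos : 0 < (u + h) ^ c := rpow_pos_of_pos hv _
        have := mul_le_mul_of_nonneg_left hF hVpos.le
        calc (u + h) ^ c + (2*c - 1) * h
            = (u + h) ^ c * (1 + ((2*c - 1) * a / lam0) * x) := by
              linear_combination (-((u + h) ^ c)) * hsx - (2*c - 1) * h * hvv
          _ ≤ (u + h) ^ c * (1 - x) ^ (κ - 1) := this
      calc ((u + 2*h) ^ c - (u + h) ^ c) * (u + 2*h) ^ c
          ≤ ((u + h) ^ c - u ^ c) * ((u + h) ^ c + (2*c - 1) * h) :=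
            core_big c h u hch hc1 hh hu incr
        _ ≤ ((u + h) ^ c - u ^ c) * ((u + h) ^ c * (1 - x) ^ (κ - 1)) :=
            mul_le_mul_of_nonneg_left hVF hA
  -- scale by γ0⁻²
  have hγinv : (0:ℝ) ≤ γ0⁻¹ * γ0⁻¹ := by positivity
  have := mul_le_mul_of_nonneg_left core hγinv
  calc (γ0⁻¹ * (u + 2*h) ^ c - γ0⁻¹ * (u + h) ^ c) * (γ0⁻¹ * (u + 2*h) ^ c)
      = γ0⁻¹ * γ0⁻¹ * (((u + 2*h) ^ c - (u + h) ^ c) * (u + 2*h) ^ c) := by ring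
    _ ≤ γ0⁻¹ * γ0⁻¹ * (((u + h) ^ c - u ^ c) *
          ((u + h) ^ c * (1 - lam0 * (γ0 * (u + h) ^ (-c))) ^ (κ - 1))) := this
    _ = (γ0⁻¹ * (u + h) ^ c - γ0⁻¹ * u ^ c) * (γ0⁻¹ * (u + h) ^ c) *
          (1 - lam0 * (γ0 * (u + h) ^ (-c))) ^ (κ - 1) := by ring
end

section
/- For every constant c with 0 < c ≤ 1/2, the function f(x) = (x^c − (x−1)^c)·x^c is nonincreasing on the interval (1, ∞). -/
open Real

/-- For `0 < c ≤ 1/2`, the function `f(x) = (x^c - (x-1)^c) x^c` is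
nonincreasing on `(1, ∞)`. -/
theorem f_antitone_on_Ioi_one (c : ℝ) (hc : 0 < c) (hc2 : c ≤ 1 / 2) :
    AntitoneOn (fun x : ℝ => (x ^ c - (x - 1) ^ c) * x ^ c) (Set.Ioi (1 : ℝ)) := by
  have hderiv : ∀ x ∈ Set.Ioi (1 : ℝ),
      HasDerivAt (fun x : ℝ => (x ^ c - (x - 1) ^ c) * x ^ c)
        ((c * x ^ (c - 1) - c * (x - 1) ^ (c - 1) * 1) * x ^ c
          + (x ^ c - (x - 1) ^ c) * (c * x ^ (c - 1))) x := by
    intro x hx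
    have hx1 : (1 : ℝ) < x := hx
    have hx0 : x ≠ 0 := by linarith
    have hx10 : x - 1 ≠ 0 := by intro h; nlinarith
    have h1 : HasDerivAt (fun x : ℝ => x ^ c) (c * x ^ (c - 1)) x :=
      Real.hasDerivAt_rpow_const (Or.inl hx0)
    have h2 : HasDerivAt (fun x : ℝ => (x - 1) ^ c) (c * (x - 1) ^ (c - 1) * 1) x := by
      have := (Real.hasDerivAt_rpow_const (p := c) (Or.inl hx10)).comp x
        ((hasDerivAt_id x).sub_const 1)
      simpa [Function.comp_def] using this
    exact (h1.sub h2).mul h1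
  apply antitoneOn_of_deriv_nonpos (convex_Ioi 1)
  · exact ContinuousOn.mul ((continuousOn_id.rpow_const (fun x hx => Or.inl (by
      have : (1:ℝ) < x := hx; positivity))).sub
      (ContinuousOn.rpow_const (by fun_prop) (fun x hx => Or.inl (by
        have : (1:ℝ) < x := hx; intro h; nlinarith))))
      (continuousOn_id.rpow_const (fun x hx => Or.inl (by
        have : (1:ℝ) < x := hx; positivity)))
  · intro x hx
    rw [interior_Ioi] at hx
    exact (hderiv x hx).differentiableAt.differentiableWithinAt
  · intro x hx
    rw [interior_Ioi] at hx
    rw [(hderiv x hx).deriv]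
    have hx1 : (1 : ℝ) < x := hx
    have hxpos : (0 : ℝ) < x := by linarith
    have hy : (0 : ℝ) < x - 1 := by linarith
    set a := x ^ (c - 1) with ha
    set b := (x - 1) ^ (c - 1) with hb
    set B := (x - 1) ^ (1 - c) with hB
    have hapos : 0 < a := Real.rpow_pos_of_pos hxpos _
    have hbpos : 0 < b := Real.rpow_pos_of_pos hy _
    have hBpos : 0 < B := Real.rpow_pos_of_pos hy _
    have hbB : b * B = 1 := by
      rw [hb, hB, ← Real.rpow_add hy]; norm_num
    have hu : x ^ c = a * x := by
      rw [ha, ← Real.rpow_add_one hxpos.ne' (c - 1)]; ring_nf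
    have hv : (x - 1) ^ c = b * (x - 1) := by
      rw [hb, ← Real.rpow_add_one hy.ne' (c - 1)]; ring_nf
    have hAM : x ^ c * B ≤ c * x + (1 - c) * (x - 1) :=
      Real.geom_mean_le_arith_mean2_weighted hc.le (by linarith) hxpos.le hy.le (by ring)
    have key : x ^ c ≤ b * (x - 1 / 2) := by
      have h1 : b * (x ^ c * B) ≤ b * (c * x + (1 - c) * (x - 1)) :=
        mul_le_mul_of_nonneg_left hAM hbpos.le
      have h2 : b * (x ^ c * B) = x ^ c := by
        calc b * (x ^ c * B) = (b * B) * x ^ c := by ring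
        _ = x ^ c := by rw [hbB]; ring
      have h3 : c * x + (1 - c) * (x - 1) ≤ x - 1 / 2 := by nlinarith
      calc x ^ c = b * (x ^ c * B) := h2.symm
        _ ≤ b * (c * x + (1 - c) * (x - 1)) := h1
        _ ≤ b * (x - 1 / 2) := mul_le_mul_of_nonneg_left h3 hbpos.le
    rw [hu, hv]
    have goal : 2 * a * (a * x) ≤ b * (a * x) + a * (b * (x - 1)) := by
      have : 2 * (a * x) ≤ b * (2 * x - 1) := by
        rw [← hu]; nlinarith
      nlinarith
    nlinarith
end

section
/- Let A be an n×n real symmetric positive definite matrix with smallest eigenvalue λ0 > 0 and largest eigenvalue λ1, let γ_t = γ0·(1 + a·γ0·t)^{−c} with γ0 > 0, a > 0, 0 ≤ c ≤ 1, and suppose γ0·λ1 ≤ 1 and (2c−1)·a < λ0. Define X_j^t = ∏_{i=j}^t (I − γ_i·A) (with X_j^t = I for j > t) and X̄_j^t = γ_j·Σ_{i=j}^t X_{j+1}^i. Then with c0 = a·c·(1 + a·c·γ0)/(λ0 − max(0, 2c−1)·a), for all integers 1 ≤ j ≤ t, in the Loewner order: (I − X_j^t)·A⁻¹ ≼ X̄_j^t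 ≼ (1 + c0·(1 + a·γ0·j)^{c−1})·A⁻¹ ≼ (1 + c0)·A⁻¹. -/
open Matrix Finset Real

private lemma aux_log_up (w b : ℝ) (hb : 0 < b) (hw0 : 0 < w) :
    (Real.log (w+b) - Real.log w) * (w+b) ≤ b + b^2/(2*w) := by
  have hw' : (0:ℝ) < w + b := by linarith
  obtain ⟨t, ht⟩ : ∃ t : ℝ, t = Real.log (w+b) - Real.log w := ⟨_, rfl⟩
  rw [← ht]
  have ht0 : 0 < t := by
    have := Real.log_lt_log hw0 (by linarith : w < w + b)
    rw [ht]; linarith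
  obtain ⟨s, hs⟩ : ∃ s : ℝ, s = Real.exp (t/2) := ⟨_, rfl⟩
  have hs0 : 0 < s := by rw [hs]; exact Real.exp_pos _
  have hs2 : s^2 * w = w + b := by
    rw [hs, ← Real.exp_nat_mul]
    push_cast
    rw [show (2:ℝ) * (t/2) = t from by ring, ht, Real.exp_sub,
      Real.exp_log hw', Real.exp_log hw0]
    field_simp
  have hts : t ≤ s - s⁻¹ := by
    have h1 : t/2 < Real.sinh (t/2) := (Real.self_lt_sinh_iff).mpr (by linarith)
    rw [Real.sinh_eq] at h1
    have h2 : Real.exp (-(t/2)) = s⁻¹ := by rw [Real.exp_neg, hs]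
    rw [h2, ← hs] at h1
    linarith
  have hkey : (s - s⁻¹)*(w+b) = b*s := by
    rw [show s - s⁻¹ = (s^2-1)/s from by field_simp,
      div_mul_eq_mul_div, div_eq_iff hs0.ne']
    linear_combination hs2
  have hsle : s ≤ 1 + b/(2*w) := by
    have hbw : (0:ℝ) < b/(2*w) := by positivity
    have h2 : s^2 ≤ (1 + b/(2*w))^2 := by
      have e : (1 + b/(2*w))^2 = 1 + b/w + (b/(2*w))^2 := by field_simp; ring
      have e2 : s^2 = 1 + b/w := by
        field_simp
        linarith [hs2]
      rw [e, e2]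
      nlinarith [sq_nonneg (b/(2*w))]
    nlinarith [h2, hs0, hbw]
  calc t*(w+b) ≤ (s - s⁻¹)*(w+b) := by nlinarith
    _ = b*s := hkey
    _ ≤ b*(1 + b/(2*w)) := by nlinarith
    _ = b + b^2/(2*w) := by field_simp

private lemma aux_log_lo (w b : ℝ) (hb : 0 < b) (hw0 : 0 < w) :
    b/(w+b) ≤ Real.log (w+b) - Real.log w := by
  have hw' : (0:ℝ) < w + b := by linarith
  have h1 : w/(w+b) ≤ Real.exp (-(b/(w+b))) := by
    have h2 := Real.add_one_le_exp (-(b/(w+b)))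
    calc w/(w+b) = 1 - b/(w+b) := by field_simp; ring
      _ ≤ _ := by linarith
  have h2 : Real.exp (b/(w+b)) ≤ (w+b)/w := by
    have hww : 0 < w/(w+b) := by positivity
    rw [show b/(w+b) = -(-(b/(w+b))) from by ring, Real.exp_neg]
    rw [show (w+b)/w = (w/(w+b))⁻¹ from by rw [inv_div]]
    exact inv_anti₀ hww h1
  have h3 := Real.log_le_log (Real.exp_pos _) h2
  rw [Real.log_exp, Real.log_div hw'.ne' hw0.ne'] at h3
  linarith

private lemma aux_core1 (b θ c K t w : ℝ) (hb : 0 < b) (hθ0 : 0 < θ) (hθ1 : θ ≤ 1)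
    (hc0 : 0 < c) (hchalf : c ≤ 1/2) (hw : 1+b ≤ w)
    (hK : K = c*b*(1+c*b)/θ)
    (htup : t*(w+b) ≤ b + b^2/(2*w)) (htlo : b/(w+b) ≤ t) (ht0 : 0 < t) :
    c*t*(w+b) ≤ K*θ + K*(1-2*c)*t := by
  have hw0 : (0:ℝ) < w := by linarith
  have hw' : (0:ℝ) < w + b := by linarith
  have hKθ : K*θ = c*b*(1+c*b) := by
    rw [hK, div_mul_cancel₀ _ hθ0.ne']
  have hK0 : (0:ℝ) ≤ K := by rw [hK]; positivity
  have hcb0 : (0:ℝ) ≤ c*b := by positivity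
  have hKge : c*b ≤ K := by
    rw [hK, le_div_iff₀ hθ0]
    have q1 : c*b*θ ≤ c*b*1 := mul_le_mul_of_nonneg_left hθ1 hcb0
    have q2 : c*b ≤ c*b*(1+c*b) := le_mul_of_one_le_right hcb0 (by linarith)
    linarith
  have frac : 1/(2*w) ≤ c + (1-2*c)/(w+b) := by
    rw [show c + (1-2*c)/(w+b) = (c*(w+b) + (1-2*c))/(w+b) from by field_simp,
      div_le_div_iff₀ (by positivity) hw']
    rcases le_or_gt 2 (w+b) with h2w | h2w
    · nlinarith [mul_nonneg (mul_nonneg hc0.le hw0.le) (by linarith : (0:ℝ) ≤ w+b-2)]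
    · nlinarith [mul_nonneg (mul_nonneg (by linarith : (0:ℝ) ≤ 1-2*c) hw0.le)
        (by linarith : (0:ℝ) ≤ 2-(w+b)),
        mul_nonneg (by linarith : (0:ℝ) ≤ w-1) hw'.le]
  have e1 : c*t*(w+b) ≤ c*b + c*b^2*(1/(2*w)) := by
    have := mul_le_mul_of_nonneg_left htup hc0.le
    calc c*t*(w+b) = c*(t*(w+b)) := by ring
      _ ≤ c*(b + b^2/(2*w)) := this
      _ = c*b + c*b^2*(1/(2*w)) := by ring
  have e3 : c*b^2*(1/(2*w)) ≤ c*b^2*(c + (1-2*c)/(w+b)) :=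
    mul_le_mul_of_nonneg_left frac (by positivity)
  have h12c : (0:ℝ) ≤ 1-2*c := by linarith
  have e4 : c*b^2*((1-2*c)/(w+b)) ≤ K*(1-2*c)*t := by
    calc c*b^2*((1-2*c)/(w+b)) = (c*b*(1-2*c))*(b/(w+b)) := by ring
      _ ≤ (c*b*(1-2*c))*t := mul_le_mul_of_nonneg_left htlo (by positivity)
      _ = (c*b)*((1-2*c)*t) := by ring
      _ ≤ K*((1-2*c)*t) := mul_le_mul_of_nonneg_right hKge (mul_nonneg h12c ht0.le)
      _ = K*(1-2*c)*t := by ring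
  nlinarith [e1, e3, e4, hKθ]

private lemma aux_asm1 (K θ c t wb p q r v g : ℝ)
    (hK0 : 0 ≤ K) (hc0 : 0 ≤ c) (h12c : 0 ≤ 1-2*c) (ht0 : 0 < t)
    (hi : p - q ≤ c*t*p) (hii : (1 + (1-2*c)*t) * r ≤ v)
    (e1 : p = g * wb) (e2 : r = g * p) (hp2 : 1 ≤ p) (hg : 0 < g)
    (hcore : c*t*wb ≤ K*θ + K*(1-2*c)*t) :
    p - q + K * (r - v) ≤ K*θ*g := by
  have s1 : K*(r - v) ≤ -(K*(1-2*c)*t*r) := by nlinarith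
  have s2 : c*t*p ≤ K*θ*g + K*(1-2*c)*t*g := by
    calc c*t*p = (c*t*wb)*g := by rw [e1]; ring
      _ ≤ (K*θ + K*(1-2*c)*t)*g := mul_le_mul_of_nonneg_right hcore hg.le
      _ = K*θ*g + K*(1-2*c)*t*g := by ring
  have s3 : K*(1-2*c)*t*g ≤ K*(1-2*c)*t*r := by
    have : g ≤ r := by nlinarith
    have h0 : (0:ℝ) ≤ K*(1-2*c)*t := by positivity
    nlinarith
  linarith

set_option maxHeartbeats 1000000 in
private lemma core_ineq (b θ c : ℝ) (hb : 0 < b) (hθ1 : θ ≤ 1)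
    (hc : 0 ≤ c) (hc1 : c ≤ 1) (hθM : max 0 (2*c-1) * b < θ)
    (w : ℝ) (hw : 1 + b ≤ w) :
    (w+b)^c - w^c + (c*b*(1+c*b)/(θ - max 0 (2*c-1)*b)) * ((w+b)^(2*c-1) - w^(2*c-1))
      ≤ (c*b*(1+c*b)/(θ - max 0 (2*c-1)*b)) * θ * (w+b)^(c-1) := by
  have hw0 : (0:ℝ) < w := by linarith
  have hw1 : (1:ℝ) ≤ w := by linarith
  have hw' : (0:ℝ) < w + b := by linarith
  have hw'1 : (1:ℝ) ≤ w + b := by linarith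
  have hMnn : (0:ℝ) ≤ max 0 (2*c-1) := le_max_left _ _
  have hθ0 : (0:ℝ) < θ := lt_of_le_of_lt (by positivity) hθM
  have hD : (0:ℝ) < θ - max 0 (2*c-1)*b := by linarith
  have hcb : (0:ℝ) ≤ c*b := by positivity
  rcases le_or_gt c (1/2) with hchalf | hchalf
  · -- M = 0
    have hM : max 0 (2*c-1) = 0 := max_eq_left (by linarith)
    rw [hM, show θ - 0*b = θ from by ring]
    obtain ⟨K, hKθ'⟩ : ∃ K : ℝ, K = c*b*(1+c*b)/θ := ⟨_, rfl⟩
    rw [← hKθ']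
    have hK0 : (0:ℝ) ≤ K := by rw [hKθ']; positivity
    rcases eq_or_lt_of_le hc with hc0 | hc0
    · have hc0' : c = 0 := hc0.symm
      subst hc0'
      have hKz : K = 0 := by rw [hKθ']; norm_num
      rw [hKz]
      norm_num [Real.rpow_zero]
    · -- 0 < c
      obtain ⟨t, ht⟩ : ∃ t : ℝ, t = Real.log (w+b) - Real.log w := ⟨_, rfl⟩
      have ht0 : 0 < t := by
        have := Real.log_lt_log hw0 (by linarith : w < w + b)
        rw [ht]; linarith
      have hi : (w+b)^c - w^c ≤ c*t*(w+b)^c := by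
        have h1 : (w+b)^c * (1 - c*t) ≤ w^c := by
          rw [Real.rpow_def_of_pos hw', Real.rpow_def_of_pos hw0]
          calc Real.exp (Real.log (w+b) * c) * (1 - c*t)
              ≤ Real.exp (Real.log (w+b) * c) * Real.exp (-(c*t)) := by
                have h2 := Real.add_one_le_exp (-(c*t))
                have h3 := Real.exp_pos (Real.log (w+b) * c)
                nlinarith
            _ = Real.exp (Real.log w * c) := by
                rw [← Real.exp_add]; congr 1; rw [ht]; ring
        nlinarith [Real.rpow_pos_of_pos hw' c]
      have hii : (1 + (1-2*c)*t) * (w+b)^(2*c-1) ≤ w^(2*c-1) := by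
        rw [Real.rpow_def_of_pos hw', Real.rpow_def_of_pos hw0]
        calc (1 + (1-2*c)*t) * Real.exp (Real.log (w+b) * (2*c-1))
            ≤ Real.exp ((1-2*c)*t) * Real.exp (Real.log (w+b) * (2*c-1)) := by
              have h2 := Real.add_one_le_exp ((1-2*c)*t)
              have h3 := Real.exp_pos (Real.log (w+b) * (2*c-1))
              nlinarith
          _ = Real.exp (Real.log w * (2*c-1)) := by
              rw [← Real.exp_add]; congr 1; rw [ht]; ring
      have htup : t*(w+b) ≤ b + b^2/(2*w) := by
        rw [ht]; exact aux_log_up w b hb hw0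
      have htlo : b/(w+b) ≤ t := by
        rw [ht]; exact aux_log_lo w b hb hw0
      have hcore := aux_core1 b θ c K t w hb hθ0 hθ1 hc0 hchalf hw hKθ' htup htlo ht0
      have e1 : (w+b)^c = (w+b)^(c-1) * (w+b) := by
        rw [← Real.rpow_add_one hw'.ne' (c-1)]; norm_num
      have e2 : (w+b)^(2*c-1) = (w+b)^(c-1) * (w+b)^c := by
        rw [← Real.rpow_add hw' (c-1) c]; ring_nf
      have hp1 : (0:ℝ) < (w+b)^(c-1) := Real.rpow_pos_of_pos hw' _
      have hp2 : (1:ℝ) ≤ (w+b)^c := by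
        calc (1:ℝ) = (w+b)^(0:ℝ) := by rw [Real.rpow_zero]
          _ ≤ (w+b)^c := Real.rpow_le_rpow_of_exponent_le hw'1 hc
      exact aux_asm1 K θ c t (w+b) ((w+b)^c) (w^c) ((w+b)^(2*c-1)) (w^(2*c-1))
        ((w+b)^(c-1)) hK0 hc (by linarith) ht0 hi hii e1 e2 hp2 hp1 hcore
  · -- M = 2c-1 > 0
    have hM : max 0 (2*c-1) = 2*c-1 := max_eq_right (by linarith)
    rw [hM] at hD ⊢
    obtain ⟨K, hK⟩ : ∃ K : ℝ, K = c*b*(1+c*b)/(θ - (2*c-1)*b) := ⟨_, rfl⟩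
    rw [← hK]
    have hK0 : (0:ℝ) ≤ K := by rw [hK]; positivity
    have hd0 : (0:ℝ) < 2*c-1 := by linarith
    obtain ⟨u, hu⟩ : ∃ u : ℝ, u = b/w := ⟨_, rfl⟩
    have hu0 : 0 < u := by rw [hu]; positivity
    have hub : u ≤ b := by rw [hu, div_le_iff₀ hw0]; nlinarith
    have hum1 : (-1:ℝ) ≤ u := by linarith
    have e0 : w + b = w * (1+u) := by rw [hu]; field_simp
    have h1u : (0:ℝ) < 1 + u := by linarith
    have bern1 : (1+u)^c ≤ 1 + c*u := rpow_one_add_le_one_add_mul_self hum1 hc hc1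
    have bern2 : (1+u)^(2*c-1) ≤ 1 + (2*c-1)*u :=
      rpow_one_add_le_one_add_mul_self hum1 hd0.le (by linarith)
    have bern3 : (1+u)^(1-c) ≤ 1 + (1-c)*u :=
      rpow_one_add_le_one_add_mul_self hum1 (by linarith) (by linarith)
    have hwc : (0:ℝ) < w^c := Real.rpow_pos_of_pos hw0 _
    have hwc1 : (0:ℝ) < w^(c-1) := Real.rpow_pos_of_pos hw0 _
    have hw'c1 : (0:ℝ) < (w+b)^(c-1) := Real.rpow_pos_of_pos hw' _
    have hwd : (0:ℝ) < w^(2*c-1) := Real.rpow_pos_of_pos hw0 _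
    have ewc1 : w^(c-1) = w^c / w := Real.rpow_sub_one hw0.ne' c
    have ewd1 : w^(2*c-2) = w^(2*c-1) / w := by
      rw [show (2*c-2 : ℝ) = (2*c-1) - 1 from by ring]
      exact Real.rpow_sub_one hw0.ne' _
    have hAb : (w+b)^c - w^c ≤ c*b*w^(c-1) := by
      have h1 : (w+b)^c = w^c * (1+u)^c := by
        rw [e0, Real.mul_rpow hw0.le h1u.le]
      have h2 : w^c * (1+u)^c ≤ w^c * (1+c*u) := mul_le_mul_of_nonneg_left bern1 hwc.le
      have h3 : w^c * (1+c*u) - w^c = c*b*(w^c/w) := by rw [hu]; field_simp; ring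
      rw [h1, ewc1]; linarith
    have hBb : (w+b)^(2*c-1) - w^(2*c-1) ≤ (2*c-1)*b*w^(2*c-2) := by
      have h1 : (w+b)^(2*c-1) = w^(2*c-1) * (1+u)^(2*c-1) := by
        rw [e0, Real.mul_rpow hw0.le h1u.le]
      have h2 : w^(2*c-1) * (1+u)^(2*c-1) ≤ w^(2*c-1) * (1+(2*c-1)*u) :=
        mul_le_mul_of_nonneg_left bern2 hwd.le
      have h3 : w^(2*c-1) * (1+(2*c-1)*u) - w^(2*c-1) = (2*c-1)*b*(w^(2*c-1)/w) := by
        rw [hu]; field_simp; ring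
      rw [h1, ewd1]; linarith
    have hiii : w^(c-1) ≤ (1+c*b) * (w+b)^(c-1) := by
      have h1 : (w+b)^(c-1) = w^(c-1) * (1+u)^(c-1) := by
        rw [e0, Real.mul_rpow hw0.le h1u.le]
      have h2 : w^(c-1) = (w+b)^(c-1) * (1+u)^(1-c) := by
        rw [h1, mul_assoc, ← Real.rpow_add h1u,
          show (c-1) + (1-c) = 0 from by ring, Real.rpow_zero, mul_one]
      rw [h2]
      have h3 : (1+u)^(1-c) ≤ 1 + c*b := by
        have h4 : (1-c)*u ≤ c*b := by nlinarith
        linarith [bern3]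
      calc (w+b)^(c-1) * (1+u)^(1-c) ≤ (w+b)^(c-1) * (1+c*b) :=
            mul_le_mul_of_nonneg_left h3 hw'c1.le
        _ = (1+c*b) * (w+b)^(c-1) := by ring
    have hiv : w^(2*c-2) ≤ (w+b)^(c-1) := by
      have h1 : ((w^(2:ℕ) : ℝ))^(c-1:ℝ) = w^(2*c-2:ℝ) := by
        rw [← Real.rpow_natCast w 2, ← Real.rpow_mul hw0.le]
        congr 1
        push_cast
        ring
      rw [← h1]
      exact Real.rpow_le_rpow_of_nonpos hw'
        (by push_cast
            nlinarith [mul_le_mul_of_nonneg_right hw hw0.le,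
              mul_nonneg hb.le (by linarith : (0:ℝ) ≤ w-1)] : w+b ≤ (w^(2:ℕ):ℝ))
        (by linarith : c-1 ≤ 0)
    have hKD : K * (θ - (2*c-1)*b) = c*b*(1+c*b) := by
      rw [hK, div_mul_cancel₀ _ hD.ne']
    have hdb : (0:ℝ) ≤ (2*c-1)*b := mul_nonneg hd0.le hb.le
    calc (w+b)^c - w^c + K * ((w+b)^(2*c-1) - w^(2*c-1))
        ≤ c*b*w^(c-1) + K*((2*c-1)*b*w^(2*c-2)) := by
          have := mul_le_mul_of_nonneg_left hBb hK0
          linarith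
      _ ≤ c*b*((1+c*b)*(w+b)^(c-1)) + K*((2*c-1)*b*(w+b)^(c-1)) := by
          have t1 : c*b*w^(c-1) ≤ c*b*((1+c*b)*(w+b)^(c-1)) :=
            mul_le_mul_of_nonneg_left hiii hcb
          have t2 : K*((2*c-1)*b*w^(2*c-2)) ≤ K*((2*c-1)*b*(w+b)^(c-1)) :=
            mul_le_mul_of_nonneg_left (mul_le_mul_of_nonneg_left hiv hdb) hK0
          linarith
      _ = (c*b*(1+c*b) + K*((2*c-1)*b)) * (w+b)^(c-1) := by ring
      _ = K * θ * (w+b)^(c-1) := by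
          rw [← hKD]; ring


private lemma step_ineq (b θ c K : ℝ) (hb : 0 < b) (hθ1 : θ ≤ 1) (hc : 0 ≤ c) (hc1 : c ≤ 1)
    (hθM : max 0 (2*c-1)*b < θ) (hK : K = c*b*(1+c*b)/(θ - max 0 (2*c-1)*b))
    (w : ℝ) (hw : 1+b ≤ w) :
    (w+b)^c/w^c + ((w+b)^c/w^c - θ/w^c) * (K * (w+b)^(c-1)) ≤ 1 + K * w^(c-1) := by
  have hw0 : (0:ℝ) < w := by linarith
  have hw' : (0:ℝ) < w + b := by linarith
  have hwc : (0:ℝ) < w^c := Real.rpow_pos_of_pos hw0 _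
  have core := core_ineq b θ c hb hθ1 hc hc1 hθM w hw
  rw [← hK] at core
  have e1 : w^(c-1) * w^c = w^(2*c-1) := by
    rw [← Real.rpow_add hw0]; ring_nf
  have e2 : (w+b)^(c-1) * (w+b)^c = (w+b)^(2*c-1) := by
    rw [← Real.rpow_add hw']; ring_nf
  have goal' : (w+b)^c + ((w+b)^c - θ) * (K * (w+b)^(c-1)) ≤ w^c + K * (w^(c-1) * w^c) := by
    rw [e1]
    have expand : (w+b)^c + ((w+b)^c - θ) * (K * (w+b)^(c-1))
        = (w+b)^c + K*((w+b)^(c-1) * (w+b)^c) - K*θ*(w+b)^(c-1) := by ring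
    rw [expand, e2]
    linarith [core]
  have h3 : (w+b)^c/w^c + ((w+b)^c/w^c - θ/w^c) * (K * (w+b)^(c-1))
      = ((w+b)^c + ((w+b)^c - θ) * (K * (w+b)^(c-1)))/w^c := by ring
  have h4 : 1 + K * w^(c-1) = (w^c + K * (w^(c-1) * w^c))/w^c := by
    field_simp
  rw [h3, h4]
  exact (div_le_div_iff_of_pos_right hwc).mpr goal'

private lemma prod_split_bot {j t : ℕ} (h : j ≤ t) (f : ℕ → ℝ) :
    ∏ k ∈ Icc j t, f k = f j * ∏ k ∈ Icc (j+1) t, f k := by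
  rw [Finset.Icc_add_one_left_eq_Ioc, ← Finset.Ioc_insert_left h, Finset.prod_insert (by simp)]

private lemma sum_split_bot {j t : ℕ} (h : j ≤ t) (f : ℕ → ℝ) :
    ∑ k ∈ Icc j t, f k = f j + ∑ k ∈ Icc (j+1) t, f k := by
  rw [Finset.Icc_add_one_left_eq_Ioc, ← Finset.Ioc_insert_left h, Finset.sum_insert (by simp)]

private lemma scalar_low (γ : ℕ → ℝ) (l : ℝ) (hl : 0 ≤ l)
    (hγpos : ∀ k, 0 < γ k) (hγl1 : ∀ k, γ k * l ≤ 1)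
    (hanti : ∀ j k : ℕ, j ≤ k → γ k ≤ γ j) :
    ∀ j t : ℕ, j ≤ t →
      1 - ∏ k ∈ Icc j t, (1 - γ k * l)
        ≤ l * (γ j * ∑ i ∈ Icc j t, ∏ k ∈ Icc (j+1) i, (1 - γ k * l)) := by
  intro j t h
  induction t, h using Nat.le_induction with
  | base =>
    rw [Finset.Icc_self, Finset.sum_singleton, Finset.prod_singleton,
      Finset.Icc_eq_empty (by omega : ¬ j+1 ≤ j), Finset.prod_empty, mul_one]
    have : l * γ j = γ j * l := mul_comm _ _
    linarith
  | succ t ht ih =>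
    have hj1 : j ≤ t + 1 := by omega
    rw [Finset.sum_Icc_succ_top hj1, Finset.prod_Icc_succ_top hj1]
    have hQ0 : (0:ℝ) ≤ ∏ k ∈ Icc (j+1) t, (1 - γ k*l) :=
      Finset.prod_nonneg fun k _ => by have := hγl1 k; linarith
    have hfact1 : ∏ k ∈ Icc (j+1) (t+1), (1 - γ k * l)
        = (∏ k ∈ Icc (j+1) t, (1 - γ k*l)) * (1 - γ (t+1) * l) :=
      Finset.prod_Icc_succ_top (by omega) _
    have hfact2 : ∏ k ∈ Icc j t, (1 - γ k * l)
        = (1 - γ j * l) * ∏ k ∈ Icc (j+1) t, (1 - γ k*l) :=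
      prod_split_bot ht _
    have key : γ (t+1) * l * ∏ k ∈ Icc j t, (1 - γ k * l)
        ≤ l * γ j * ∏ k ∈ Icc (j+1) (t+1), (1 - γ k * l) := by
      rw [hfact1, hfact2]
      have hmono := hanti j (t+1) (by omega)
      nlinarith [mul_nonneg (mul_nonneg hl hQ0) (sub_nonneg.2 hmono),
        mul_nonneg (mul_nonneg (mul_nonneg hl hQ0) (sub_nonneg.2 hmono)) (hγpos (t+1)).le,
        mul_nonneg (mul_nonneg hl hQ0) (mul_nonneg (hγpos j).le (hγpos (t+1)).le)]
    have expand : l * (γ j * ((∑ i ∈ Icc j t, ∏ k ∈ Icc (j+1) i, (1 - γ k * l))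
          + ∏ k ∈ Icc (j+1) (t+1), (1 - γ k * l)))
        = l * (γ j * ∑ i ∈ Icc j t, ∏ k ∈ Icc (j+1) i, (1 - γ k * l))
          + l * γ j * ∏ k ∈ Icc (j+1) (t+1), (1 - γ k * l) := by ring
    rw [expand]
    nlinarith [ih, key]

set_option maxHeartbeats 1000000 in
private lemma scalar_up
    (γ0 a c lam0 lam1 c0 l : ℝ) (γ : ℕ → ℝ)
    (hγ0 : 0 < γ0) (ha : 0 < a) (hc : 0 ≤ c) (hc1 : c ≤ 1)
    (hl0 : 0 < lam0) (hgl : γ0 * lam1 ≤ 1) (hca : (2*c-1)*a < lam0)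
    (hc0def : c0 = a*c*(1 + a*c*γ0) / (lam0 - max 0 (2*c-1)*a))
    (hγ : ∀ t : ℕ, γ t = γ0 * (1 + a*γ0*t)^(-c))
    (hll : lam0 ≤ l) (hlu : l ≤ lam1) :
    ∀ m j : ℕ, 1 ≤ j →
      l * (γ j * ∑ i ∈ Icc j (j+m), ∏ k ∈ Icc (j+1) i, (1 - γ k * l))
        ≤ 1 + c0 * (1 + a*γ0*j)^(c-1) := by
  have hb : (0:ℝ) < a*γ0 := by positivity
  have hlpos : 0 < l := lt_of_lt_of_le hl0 hll
  have hθ0 : (0:ℝ) < lam0*γ0 := by positivity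
  have hθ1 : lam0*γ0 ≤ 1 := by
    have h1 : lam0*γ0 ≤ lam1*γ0 :=
      mul_le_mul_of_nonneg_right (by linarith) hγ0.le
    calc lam0*γ0 ≤ lam1*γ0 := h1
      _ = γ0*lam1 := mul_comm _ _
      _ ≤ 1 := hgl
  have hMa : max 0 (2*c-1) * a < lam0 := by
    rw [max_mul_of_nonneg _ _ ha.le]
    exact max_lt (by linarith) hca
  have hθM : max 0 (2*c-1) * (a*γ0) < lam0*γ0 := by
    have := mul_lt_mul_of_pos_right hMa hγ0
    calc max 0 (2*c-1)*(a*γ0) = (max 0 (2*c-1)*a)*γ0 := by ring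
      _ < lam0*γ0 := this
  have hden : lam0 - max 0 (2*c-1)*a > 0 := by linarith
  have hc0K : c0 = c*(a*γ0)*(1 + c*(a*γ0))/((lam0*γ0) - max 0 (2*c-1)*(a*γ0)) := by
    rw [hc0def, show (lam0*γ0) - max 0 (2*c-1)*(a*γ0) = (lam0 - max 0 (2*c-1)*a)*γ0 from by ring,
      div_eq_div_iff hden.ne' (mul_pos hden hγ0).ne']
    ring
  have hc0nn : 0 ≤ c0 := by
    rw [hc0def]
    apply div_nonneg _ (by linarith)
    positivity
  have hcast : ∀ k : ℕ, (0:ℝ) ≤ (k:ℝ) := fun k => Nat.cast_nonneg k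
  have hW1 : ∀ k : ℕ, (1:ℝ) ≤ 1 + a*γ0*k := fun k => by nlinarith [hcast k]
  have hγpos : ∀ k, 0 < γ k := fun k => by
    rw [hγ k]
    have := Real.rpow_pos_of_pos (show (0:ℝ) < 1 + a*γ0*k by linarith [hW1 k]) (-c)
    positivity
  have hγle : ∀ k, γ k ≤ γ0 := fun k => by
    rw [hγ k]
    have h1 : (1 + a*γ0*(k:ℝ))^(-c) ≤ 1 :=
      Real.rpow_le_one_of_one_le_of_nonpos (hW1 k) (by linarith)
    nlinarith
  have hγl1 : ∀ k, γ k * l ≤ 1 := fun k => by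
    calc γ k * l ≤ γ0 * lam1 := mul_le_mul (hγle k) hlu hlpos.le hγ0.le
      _ ≤ 1 := hgl
  intro m
  induction m with
  | zero =>
    intro j hj
    rw [Nat.add_zero, Finset.Icc_self, Finset.sum_singleton,
      Finset.Icc_eq_empty (by omega : ¬ j+1 ≤ j), Finset.prod_empty, mul_one]
    have h1 : l * γ j ≤ 1 := by
      have := hγl1 j
      linarith [mul_comm l (γ j), this]
    have h2 : 0 ≤ c0 * (1 + a*γ0*j)^(c-1) :=
      mul_nonneg hc0nn (Real.rpow_nonneg (by linarith [hW1 j]) _)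
    linarith [mul_comm l (γ j), hγl1 j]
  | succ m ih =>
    intro j hj
    have hsplit : ∑ i ∈ Icc j (j+(m+1)), ∏ k ∈ Icc (j+1) i, (1 - γ k * l)
        = 1 + (1 - γ (j+1) * l) * ∑ i ∈ Icc (j+1) ((j+1)+m), ∏ k ∈ Icc ((j+1)+1) i, (1 - γ k * l) := by
      rw [sum_split_bot (by omega : j ≤ j+(m+1)),
        Finset.Icc_eq_empty (by omega : ¬ j+1 ≤ j), Finset.prod_empty]
      congr 1
      rw [show j + (m+1) = (j+1)+m from by omega, Finset.mul_sum]
      apply Finset.sum_congr rfl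
      intro i hi
      have hji : j+1 ≤ i := (Finset.mem_Icc.mp hi).1
      rw [prod_split_bot hji]
    rw [hsplit]
    have ihB := ih (j+1) (by omega)
    obtain ⟨B, hB⟩ : ∃ B : ℝ, B = l * (γ (j+1) * ∑ i ∈ Icc (j+1) ((j+1)+m),
        ∏ k ∈ Icc ((j+1)+1) i, (1 - γ k * l)) := ⟨_, rfl⟩
    rw [← hB] at ihB
    have hγj1 : γ (j+1) ≠ 0 := (hγpos (j+1)).ne'
    have hexpand : l * (γ j * (1 + (1 - γ (j+1) * l) * ∑ i ∈ Icc (j+1) ((j+1)+m),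
          ∏ k ∈ Icc ((j+1)+1) i, (1 - γ k * l)))
        = l * γ j + (γ j / γ (j+1)) * (1 - γ (j+1) * l) * B := by
      rw [hB]
      field_simp
    rw [hexpand]
    have hcoef : 0 ≤ (γ j / γ (j+1)) * (1 - γ (j+1) * l) := by
      have h1 : 0 ≤ γ j / γ (j+1) := le_of_lt (div_pos (hγpos j) (hγpos (j+1)))
      have h2 : 0 ≤ 1 - γ (j+1)*l := by linarith [hγl1 (j+1)]
      exact mul_nonneg h1 h2
    have hstep1 : l * γ j + (γ j / γ (j+1)) * (1 - γ (j+1) * l) * B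
        ≤ l * γ j + (γ j / γ (j+1)) * (1 - γ (j+1) * l) * (1 + c0 * (1 + a*γ0*(j+1:ℕ))^(c-1)) := by
      have := mul_le_mul_of_nonneg_left ihB hcoef
      linarith
    -- now the (†) computation
    obtain ⟨w, hwdef⟩ : ∃ w : ℝ, w = 1 + a*γ0*(j:ℝ) := ⟨_, rfl⟩
    have hwge : 1 + a*γ0 ≤ w := by
      rw [hwdef]
      have : (1:ℝ) ≤ (j:ℝ) := by exact_mod_cast hj
      nlinarith
    have hw0 : 0 < w := by linarith
    have hw' : 0 < w + a*γ0 := by linarith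
    have hwc : (0:ℝ) < w^c := Real.rpow_pos_of_pos hw0 _
    have hw'c : (0:ℝ) < (w + a*γ0)^c := Real.rpow_pos_of_pos hw' _
    have hcastj : ((j:ℝ)+1) = ((j+1:ℕ):ℝ) := by push_cast; ring
    have hwb : 1 + a*γ0*((j+1:ℕ):ℝ) = w + a*γ0 := by
      rw [← hcastj, hwdef]; ring
    have hγj : γ j = γ0 * w^(-c) := by rw [hγ j, hwdef]
    have hγj1' : γ (j+1) = γ0 * (w + a*γ0)^(-c) := by
      rw [hγ (j+1), ← hwb]
    have hρ : γ j / γ (j+1) = (w + a*γ0)^c / w^c := by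
      rw [hγj, hγj1', Real.rpow_neg hw0.le, Real.rpow_neg hw'.le]
      field_simp
    have hγlam : γ j * lam0 = (lam0*γ0) / w^c := by
      rw [hγj, Real.rpow_neg hw0.le]
      field_simp
    have hstep := step_ineq (a*γ0) (lam0*γ0) c c0 hb hθ1 hc hc1 hθM hc0K w hwge
    rw [show (1:ℝ) + a * γ0 * (j:ℝ) = w from hwdef.symm]
    obtain ⟨h', hh'⟩ : ∃ h' : ℝ, h' = c0 * (w + a*γ0)^(c-1) := ⟨_, rfl⟩
    have hstep1' : l * γ j + γ j / γ (j+1) * (1 - γ (j+1) * l) * B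
        ≤ l * γ j + γ j / γ (j+1) * (1 - γ (j+1) * l) * (1 + h') := by
      rw [hh', ← hwb]; exact hstep1
    have hh'nn : 0 ≤ h' := by
      rw [hh']
      exact mul_nonneg hc0nn (Real.rpow_nonneg hw'.le _)
    have hexp2 : l * γ j + (γ j / γ (j+1)) * (1 - γ (j+1) * l) * (1 + h')
        = γ j / γ (j+1) + (γ j / γ (j+1) - γ j * l) * h' := by
      field_simp
      ring
    have hmono : (γ j / γ (j+1) - γ j * l) * h' ≤ (γ j / γ (j+1) - γ j * lam0) * h' := by
      apply mul_le_mul_of_nonneg_right _ hh'nn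
      have := mul_le_mul_of_nonneg_left hll (hγpos j).le
      linarith
    have hfin : γ j / γ (j+1) + (γ j / γ (j+1) - γ j * lam0) * h' ≤ 1 + c0 * w^(c-1) := by
      rw [hρ, hγlam, hh']
      exact hstep
    calc l * γ j + γ j / γ (j+1) * (1 - γ (j+1) * l) * B
        ≤ l * γ j + γ j / γ (j+1) * (1 - γ (j+1) * l) * (1 + h') := hstep1'
      _ = γ j / γ (j+1) + (γ j / γ (j+1) - γ j * l) * h' := hexp2
      _ ≤ γ j / γ (j+1) + (γ j / γ (j+1) - γ j * lam0) * h' := by linarith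
      _ ≤ 1 + c0 * w^(c-1) := hfin


section Phi
variable {n : ℕ}

private noncomputable def Phi (U : Matrix (Fin n) (Fin n) ℝ) (e : Fin n → ℝ) (f : ℝ → ℝ) :
    Matrix (Fin n) (Fin n) ℝ :=
  U * diagonal (fun i => f (e i)) * star U

private lemma Phi_mul (U : Matrix (Fin n) (Fin n) ℝ) (e : Fin n → ℝ)
    (hU1 : star U * U = 1) (f g : ℝ → ℝ) :
    Phi U e f * Phi U e g = Phi U e (fun x => f x * g x) := by
  unfold Phi
  calc (U * diagonal (fun i => f (e i)) * star U) * (U * diagonal (fun i => g (e i)) * star U)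
      = U * (diagonal (fun i => f (e i)) * ((star U * U) * (diagonal (fun i => g (e i)) * star U))) := by
        simp only [Matrix.mul_assoc]
    _ = U * (diagonal (fun i => f (e i)) * diagonal (fun i => g (e i))) * star U := by
        rw [hU1, Matrix.one_mul, Matrix.mul_assoc, Matrix.mul_assoc]
    _ = U * diagonal (fun i => f (e i) * g (e i)) * star U := by
        rw [diagonal_mul_diagonal]

private lemma Phi_one (U : Matrix (Fin n) (Fin n) ℝ) (e : Fin n → ℝ)
    (hU2 : U * star U = 1) :
    Phi U e (fun _ => 1) = 1 := by
  unfold Phi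
  rw [show (diagonal (fun _ : Fin n => (1:ℝ))) = 1 from diagonal_one, Matrix.mul_one, hU2]

private lemma Phi_sub (U : Matrix (Fin n) (Fin n) ℝ) (e : Fin n → ℝ) (f g : ℝ → ℝ) :
    Phi U e (fun x => f x - g x) = Phi U e f - Phi U e g := by
  unfold Phi
  rw [show (diagonal (fun i => f (e i) - g (e i)))
      = diagonal (fun i => f (e i)) - diagonal (fun i => g (e i)) from (diagonal_sub _ _).symm]
  rw [Matrix.mul_sub, Matrix.sub_mul]

private lemma Phi_add (U : Matrix (Fin n) (Fin n) ℝ) (e : Fin n → ℝ) (f g : ℝ → ℝ) :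
    Phi U e (fun x => f x + g x) = Phi U e f + Phi U e g := by
  unfold Phi
  rw [show (diagonal (fun i => f (e i) + g (e i)))
      = diagonal (fun i => f (e i)) + diagonal (fun i => g (e i)) from (diagonal_add _ _).symm]
  rw [Matrix.mul_add, Matrix.add_mul]

private lemma Phi_smul (U : Matrix (Fin n) (Fin n) ℝ) (e : Fin n → ℝ) (r : ℝ) (f : ℝ → ℝ) :
    Phi U e (fun x => r * f x) = r • Phi U e f := by
  unfold Phi
  have h1 : (fun i => r * f (e i)) = r • (fun i => f (e i)) := rfl
  rw [h1, diagonal_smul, Matrix.mul_smul, Matrix.smul_mul]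

private lemma Phi_congr (U : Matrix (Fin n) (Fin n) ℝ) (e : Fin n → ℝ) (f g : ℝ → ℝ)
    (h : ∀ i, f (e i) = g (e i)) : Phi U e f = Phi U e g := by
  have h1 : (fun i => f (e i)) = (fun i => g (e i)) := funext h
  unfold Phi
  rw [h1]

private lemma Phi_zero (U : Matrix (Fin n) (Fin n) ℝ) (e : Fin n → ℝ) :
    Phi U e (fun _ => 0) = 0 := by
  unfold Phi
  rw [show (diagonal (fun _ : Fin n => (0:ℝ))) = 0 from diagonal_zero, Matrix.mul_zero,
    Matrix.zero_mul]

private lemma Phi_sum (U : Matrix (Fin n) (Fin n) ℝ) (e : Fin n → ℝ)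
    (s : Finset ℕ) (F : ℕ → ℝ → ℝ) :
    Phi U e (fun x => ∑ i ∈ s, F i x) = ∑ i ∈ s, Phi U e (F i) := by
  classical
  induction s using Finset.induction_on with
  | empty =>
    simp only [Finset.sum_empty]
    exact Phi_zero U e
  | insert a s hx ih =>
    have h1 : (fun x => ∑ i ∈ insert a s, F i x) = fun x => F a x + ∑ i ∈ s, F i x := by
      funext x
      rw [Finset.sum_insert hx]
    rw [h1, Finset.sum_insert hx, Phi_add, ih]

private lemma Phi_psd (U : Matrix (Fin n) (Fin n) ℝ) (e : Fin n → ℝ) (f : ℝ → ℝ)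
    (hf : ∀ i, 0 ≤ f (e i)) : (Phi U e f).PosSemidef := by
  have h1 : (diagonal (fun i => f (e i))).PosSemidef :=
    Matrix.posSemidef_diagonal_iff.mpr fun i => hf i
  have h2 := h1.mul_mul_conjTranspose_same U
  rw [← Matrix.star_eq_conjTranspose] at h2
  exact h2

end Phi

set_option maxHeartbeats 1600000 in
/-- Lemma 1 of the paper: bounds on the averaged coefficient matrices
`X̄_j^t = γ_j Σ_{i=j}^t X_{j+1}^i` in the Loewner order, where
`X_j^t = ∏_{i=j}^t (I - γ_i A)`. -/
theorem averaged_transition_matrix_bounds {n : ℕ}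
    (A : Matrix (Fin n) (Fin n) ℝ) (hAsymm : A.IsSymm) (hApd : A.PosDef)
    (lam0 lam1 : ℝ) (hlam0 : 0 < lam0)
    (hlo : ∀ v : Fin n → ℝ, lam0 * (v ⬝ᵥ v) ≤ v ⬝ᵥ A *ᵥ v)
    (hhi : ∀ v : Fin n → ℝ, v ⬝ᵥ A *ᵥ v ≤ lam1 * (v ⬝ᵥ v))
    (γ0 a c : ℝ) (hγ0 : 0 < γ0) (ha : 0 < a) (hc0 : 0 ≤ c) (hc1 : c ≤ 1)
    (hgl : γ0 * lam1 ≤ 1) (hca : (2 * c - 1) * a < lam0)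
    (γ : ℕ → ℝ) (hγ : ∀ t : ℕ, γ t = γ0 * (1 + a * γ0 * t) ^ (-c))
    (X : ℕ → ℕ → Matrix (Fin n) (Fin n) ℝ)
    (hXgt : ∀ j t : ℕ, t < j → X j t = 1)
    (hXrec : ∀ j t : ℕ, j ≤ t → X j t = X j (t - 1) * (1 - γ t • A))
    (Xbar : ℕ → ℕ → Matrix (Fin n) (Fin n) ℝ)
    (hXbar : ∀ j t : ℕ, Xbar j t = γ j • ∑ i ∈ Finset.Icc j t, X (j + 1) i)
    (c0 : ℝ) (hc0def : c0 = a * c * (1 + a * c * γ0) / (lam0 - max 0 (2 * c - 1) * a)) :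
    ∀ j t : ℕ, 1 ≤ j → j ≤ t →
      (Xbar j t - (1 - X j t) * A⁻¹).PosSemidef ∧
        (((1 + c0 * (1 + a * γ0 * j) ^ (c - 1)) • A⁻¹) - Xbar j t).PosSemidef ∧
        (((1 + c0) • A⁻¹) - ((1 + c0 * (1 + a * γ0 * j) ^ (c - 1)) • A⁻¹)).PosSemidef := by
  classical
  have hA : A.IsHermitian := hApd.1
  set e : Fin n → ℝ := hA.eigenvalues with he
  have heig : ∀ i, lam0 ≤ e i ∧ e i ≤ lam1 := by
    intro i
    set v : Fin n → ℝ := ⇑(hA.eigenvectorBasis i) with hv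
    have h1 : A *ᵥ v = e i • v := hA.mulVec_eigenvectorBasis i
    have h2 : v ⬝ᵥ v = 1 := by
      have h3 := hA.eigenvectorBasis.orthonormal.1 i
      have h4 : (inner ℝ (hA.eigenvectorBasis i) (hA.eigenvectorBasis i) : ℝ) = 1 := by
        rw [real_inner_self_eq_norm_sq, h3]; norm_num
      rw [EuclideanSpace.inner_eq_star_dotProduct] at h4
      simpa using h4
    constructor
    · have h5 := hlo v
      rw [h1, dotProduct_smul, h2] at h5
      simpa using h5
    · have h5 := hhi v
      rw [h1, dotProduct_smul, h2] at h5
      simpa using h5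
  have heigpos : ∀ i, 0 < e i := fun i => lt_of_lt_of_le hlam0 (heig i).1
  set U : Matrix (Fin n) (Fin n) ℝ := (hA.eigenvectorUnitary : Matrix (Fin n) (Fin n) ℝ)
    with hUdef
  have hU1 : star U * U = 1 := Matrix.mem_unitaryGroup_iff'.mp (hA.eigenvectorUnitary).2
  have hU2 : U * star U = 1 := Matrix.mem_unitaryGroup_iff.mp (hA.eigenvectorUnitary).2
  have hΦone : Phi U e (fun _ => 1) = 1 := Phi_one U e hU2
  have hΦA : Phi U e (fun x => x) = A := by
    have hspec : A = U * diagonal e * star U := by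
      simpa using hA.spectral_theorem
    rw [hspec]
    rfl
  have hΦinv : Phi U e (fun x => x⁻¹) = A⁻¹ := by
    have h1 : A * Phi U e (fun x => x⁻¹) = 1 := by
      rw [← hΦA, Phi_mul U e hU1, ← hΦone]
      exact Phi_congr U e _ _ fun i => mul_inv_cancel₀ (heigpos i).ne'
    exact (Matrix.inv_eq_right_inv h1).symm
  -- gamma facts
  have hcast : ∀ k : ℕ, (0:ℝ) ≤ (k:ℝ) := fun k => Nat.cast_nonneg k
  have hW1 : ∀ k : ℕ, (1:ℝ) ≤ 1 + a*γ0*k := fun k => by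
    have : (0:ℝ) ≤ a*γ0*(k:ℝ) := by positivity
    linarith
  have hγpos : ∀ k, 0 < γ k := fun k => by
    rw [hγ k]
    have := Real.rpow_pos_of_pos (show (0:ℝ) < 1 + a*γ0*k by linarith [hW1 k]) (-c)
    positivity
  have hγle : ∀ k, γ k ≤ γ0 := fun k => by
    rw [hγ k]
    have h1 : (1 + a*γ0*(k:ℝ))^(-c) ≤ 1 :=
      Real.rpow_le_one_of_one_le_of_nonpos (hW1 k) (by linarith)
    nlinarith
  have hanti : ∀ j k : ℕ, j ≤ k → γ k ≤ γ j := by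
    intro j k hjk
    rw [hγ j, hγ k]
    have h1 : (1 + a*γ0*(j:ℝ)) ≤ 1 + a*γ0*(k:ℝ) := by
      have h0 : (j:ℝ) ≤ k := Nat.cast_le.mpr hjk
      have := mul_le_mul_of_nonneg_left h0 (by positivity : (0:ℝ) ≤ a*γ0)
      linarith
    have h2 := Real.rpow_le_rpow_of_nonpos
      (show (0:ℝ) < 1 + a*γ0*j by linarith [hW1 j]) h1 (by linarith : -c ≤ 0)
    exact mul_le_mul_of_nonneg_left h2 hγ0.le
  have hγl1 : ∀ (i : Fin n) (k : ℕ), γ k * e i ≤ 1 := fun i k => by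
    calc γ k * e i ≤ γ0 * lam1 :=
          mul_le_mul (hγle k) (heig i).2 (heigpos i).le hγ0.le
      _ ≤ 1 := hgl
  have hc0nn : 0 ≤ c0 := by
    have hMa : max 0 (2*c-1) * a < lam0 := by
      rw [max_mul_of_nonneg _ _ ha.le]
      exact max_lt (by linarith) hca
    rw [hc0def]
    apply div_nonneg _ (by linarith)
    positivity
  -- X as Phi
  have hXΦ : ∀ j, 1 ≤ j → ∀ t, X j t = Phi U e (fun x => ∏ k ∈ Icc j t, (1 - γ k * x)) := by
    intro j hj t
    induction t with
    | zero =>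
      rw [hXgt j 0 (by omega), Finset.Icc_eq_empty (by omega : ¬ j ≤ 0)]
      simp only [Finset.prod_empty]
      exact hΦone.symm
    | succ t ih =>
      rcases le_or_gt j (t+1) with hle | hlt
      · have hrec := hXrec j (t+1) hle
        rw [Nat.add_sub_cancel] at hrec
        rw [hrec, ih]
        have h2 : (1 : Matrix (Fin n) (Fin n) ℝ) - γ (t+1) • A
            = Phi U e (fun x => 1 - γ (t+1) * x) := by
          rw [Phi_sub U e, Phi_smul U e, hΦone, hΦA]
        rw [h2, Phi_mul U e hU1]
        apply Phi_congr
        intro i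
        rw [Finset.prod_Icc_succ_top hle]
      · rw [hXgt j (t+1) hlt, Finset.Icc_eq_empty (by omega : ¬ j ≤ t+1)]
        simp only [Finset.prod_empty]
        exact hΦone.symm
  have hXbarΦ : ∀ j t, 1 ≤ j →
      Xbar j t = Phi U e (fun x => γ j * ∑ i ∈ Icc j t, ∏ k ∈ Icc (j+1) i, (1 - γ k * x)) := by
    intro j t hj
    rw [hXbar j t]
    have h1 : ∀ i ∈ Icc j t, X (j+1) i
        = Phi U e (fun x => ∏ k ∈ Icc (j+1) i, (1 - γ k * x)) :=
      fun i _ => hXΦ (j+1) (by omega) i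
    rw [Finset.sum_congr rfl h1, ← Phi_sum U e, ← Phi_smul U e]
  intro j t hj hjt
  have hsc_up : ∀ i : Fin n,
      (e i) * (γ j * ∑ p ∈ Icc j t, ∏ k ∈ Icc (j+1) p, (1 - γ k * e i))
        ≤ 1 + c0 * (1 + a*γ0*j)^(c-1) := by
    intro i
    have h1 := scalar_up γ0 a c lam0 lam1 c0 (e i) γ hγ0 ha hc0 hc1 hlam0 hgl hca hc0def hγ
      (heig i).1 (heig i).2 (t - j) j hj
    rw [show j + (t - j) = t from by omega] at h1
    exact h1
  have hsc_low : ∀ i : Fin n,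
      1 - ∏ k ∈ Icc j t, (1 - γ k * e i)
        ≤ (e i) * (γ j * ∑ p ∈ Icc j t, ∏ k ∈ Icc (j+1) p, (1 - γ k * e i)) :=
    fun i => scalar_low γ (e i) (heigpos i).le hγpos (hγl1 i) hanti j t hjt
  refine ⟨?_, ?_, ?_⟩
  · -- lower bound claim
    have e1 : (1 - X j t) * A⁻¹
        = Phi U e (fun x => (1 - ∏ k ∈ Icc j t, (1 - γ k * x)) * x⁻¹) := by
      calc (1 - X j t) * A⁻¹
          = (Phi U e (fun _ => 1) - Phi U e (fun x => ∏ k ∈ Icc j t, (1 - γ k * x)))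
            * Phi U e (fun x => x⁻¹) := by rw [hΦone, hXΦ j hj t, hΦinv]
        _ = Phi U e (fun x => 1 - ∏ k ∈ Icc j t, (1 - γ k * x)) * Phi U e (fun x => x⁻¹) := by
            rw [Phi_sub U e]
        _ = Phi U e (fun x => (1 - ∏ k ∈ Icc j t, (1 - γ k * x)) * x⁻¹) := Phi_mul U e hU1 _ _
    rw [e1, hXbarΦ j t hj, ← Phi_sub U e]
    apply Phi_psd
    intro i
    have h1 := hsc_low i
    have hei := heigpos i
    have h2 : (1 - ∏ k ∈ Icc j t, (1 - γ k * e i)) * (e i)⁻¹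
        ≤ ((e i) * (γ j * ∑ p ∈ Icc j t, ∏ k ∈ Icc (j+1) p, (1 - γ k * e i))) * (e i)⁻¹ :=
      mul_le_mul_of_nonneg_right h1 (inv_nonneg.mpr hei.le)
    have h3 : ((e i) * (γ j * ∑ p ∈ Icc j t, ∏ k ∈ Icc (j+1) p, (1 - γ k * e i))) * (e i)⁻¹
        = γ j * ∑ p ∈ Icc j t, ∏ k ∈ Icc (j+1) p, (1 - γ k * e i) := by
      field_simp
    rw [h3] at h2
    linarith
  · -- upper bound claim
    have e2 : (1 + c0 * (1 + a * γ0 * j) ^ (c - 1)) • A⁻¹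
        = Phi U e (fun x => (1 + c0 * (1 + a * γ0 * j) ^ (c - 1)) * x⁻¹) := by
      rw [Phi_smul U e, hΦinv]
    rw [e2, hXbarΦ j t hj, ← Phi_sub U e]
    apply Phi_psd
    intro i
    have h1 := hsc_up i
    have hei := heigpos i
    have h2 : ((e i) * (γ j * ∑ p ∈ Icc j t, ∏ k ∈ Icc (j+1) p, (1 - γ k * e i))) * (e i)⁻¹
        ≤ (1 + c0 * (1 + a*γ0*j)^(c-1)) * (e i)⁻¹ :=
      mul_le_mul_of_nonneg_right h1 (inv_nonneg.mpr hei.le)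
    have h3 : ((e i) * (γ j * ∑ p ∈ Icc j t, ∏ k ∈ Icc (j+1) p, (1 - γ k * e i))) * (e i)⁻¹
        = γ j * ∑ p ∈ Icc j t, ∏ k ∈ Icc (j+1) p, (1 - γ k * e i) := by
      field_simp
    rw [h3] at h2
    linarith
  · -- trivial claim
    rw [← sub_smul,
      show (1 + c0) - (1 + c0 * (1 + a * γ0 * j) ^ (c - 1))
        = c0 * (1 - (1 + a * γ0 * j) ^ (c - 1)) from by ring,
      ← hΦinv, ← Phi_smul U e]
    apply Phi_psd
    intro i
    have hκ : (1 + a * γ0 * (j:ℝ)) ^ (c - 1) ≤ 1 :=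
      Real.rpow_le_one_of_one_le_of_nonpos (hW1 j) (by linarith)
    have := heigpos i
    apply mul_nonneg (mul_nonneg hc0nn (by linarith)) (inv_nonneg.mpr this.le)
end

section
/- Let (x_t, y_t)_{t≥1} be an i.i.d. sequence of random pairs in ℝ^n × ℝ with ‖x_t‖² = M almost surely for a constant M > 0; suppose A = E(x·xᵀ) is positive definite with smallest eigenvalue λ0 > 0, set b = E(x·y), θ* = A⁻¹b, and S = E((x·xᵀ·θ* − x·y)(x·xᵀ·θ* − x·y)ᵀ), and assume tr(S) > 0. Let (γ_t)_{t≥1} be real numbers with γ_t ≥ 2/M + δ for all t, for some δ > 0, and define the SGD iterates θ_t = θ_{t−1} − γ_t·(x_t·x_tᵀ·θ_{t−1} − x_t·y_t) starting from θ_0 = θ*. Then E(‖θ_t − θ*‖²) tends to infinity as t → ∞. -/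
open Matrix MeasureTheory ProbabilityTheory Filter

section aux
variable {Ω : Type*} [MeasurableSpace Ω] {μ : Measure Ω}

lemma aux_int_mul {f g : Ω → ℝ} (hf : MemLp f 2 μ) (hg : MemLp g 2 μ) :
    Integrable (fun ω => f ω * g ω) μ := by
  have h : MemLp (g • f) 1 μ :=
    hf.smul hg
  have := memLp_one_iff_integrable.1 h
  have h2 : Integrable (f * g) μ := by
    simpa [Pi.smul_apply, smul_eq_mul, mul_comm] using this
  exact h2

lemma aux_bdd_mul_mem2 {f g : Ω → ℝ} (hf : MemLp f 2 μ) (hgm : AEStronglyMeasurable g μ)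
    {C : ℝ} (hC : ∀ᵐ ω ∂μ, |g ω| ≤ C) : MemLp (fun ω => g ω * f ω) 2 μ := by
  refine MemLp.of_le_mul (c := C) hf (hgm.mul hf.aestronglyMeasurable) ?_
  filter_upwards [hC] with ω h
  rw [norm_mul]
  exact mul_le_mul_of_nonneg_right (by simpa using h) (norm_nonneg _)

set_option linter.unusedSectionVars false in
lemma aux_meas_dot {k : ℕ} {m : MeasurableSpace Ω} {f g : Ω → Fin k → ℝ}
    (hf : ∀ i, Measurable[m] (fun ω => f ω i)) (hg : ∀ i, Measurable[m] (fun ω => g ω i)) :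
    Measurable[m] (fun ω => f ω ⬝ᵥ g ω) := by
  simp only [dotProduct]
  exact Finset.measurable_sum _ fun i _ => (hf i).mul (hg i)

set_option linter.unusedSectionVars false in
lemma aux_expand {k : ℕ} (E xv : Fin k → ℝ) (g uu ww MM : ℝ)
    (hu : xv ⬝ᵥ E = uu) (hM : xv ⬝ᵥ xv = MM) :
    (E - (g * (uu + ww)) • xv) ⬝ᵥ (E - (g * (uu + ww)) • xv)
      = E ⬝ᵥ E + (g*g*MM - 2*g) * (uu*uu) + (2*g*g*MM - 2*g)*(uu*ww) + g*g*MM*(ww*ww) := by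
  have h1 : E ⬝ᵥ xv = uu := by rw [dotProduct_comm]; exact hu
  simp only [sub_dotProduct, dotProduct_sub, smul_dotProduct, dotProduct_smul, smul_eq_mul,
    h1, hu, hM]
  ring

end aux

/-- Divergence of SGD for linear regression: if every example `x` has squared norm `M`
and the learning rate stays above `2/M` by a fixed margin, `E‖θ_t - θ*‖²` diverges. -/
theorem sgd_divergence_large_learning_rate {n : ℕ}
    {Ω : Type*} [MeasurableSpace Ω] (μ : Measure Ω) [IsProbabilityMeasure μ]
    (x : ℕ → Ω → Fin n → ℝ) (y : ℕ → Ω → ℝ)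
    (hxm : ∀ t : ℕ, Measurable (x t)) (hym : ∀ t : ℕ, Measurable (y t))
    (hyL2 : ∀ t : ℕ, MemLp (y t) 2 μ)
    (hindep : iIndepFun
      (fun t ω => (x t ω, y t ω)) μ)
    (hident : ∀ t : ℕ, 1 ≤ t →
      IdentDistrib (fun ω => (x t ω, y t ω)) (fun ω => (x 1 ω, y 1 ω)) μ μ)
    (M : ℝ) (hM : 0 < M)
    (hnorm : ∀ t : ℕ, 1 ≤ t → ∀ᵐ ω ∂μ, x t ω ⬝ᵥ x t ω = M)
    (A : Matrix (Fin n) (Fin n) ℝ)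
    (hA : ∀ i j, A i j = ∫ ω, x 1 ω i * x 1 ω j ∂μ)
    (hApd : A.PosDef)
    (lam0 : ℝ) (hlam0 : 0 < lam0)
    (hlo : ∀ v : Fin n → ℝ, lam0 * (v ⬝ᵥ v) ≤ v ⬝ᵥ A *ᵥ v)
    (b : Fin n → ℝ) (hb : ∀ i, b i = ∫ ω, x 1 ω i * y 1 ω ∂μ)
    (θstar : Fin n → ℝ) (hθstar : θstar = A⁻¹ *ᵥ b)
    (S : Matrix (Fin n) (Fin n) ℝ)
    (hSdef : ∀ i j, S i j = ∫ ω,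
      ((x 1 ω ⬝ᵥ θstar) * x 1 ω i - y 1 ω * x 1 ω i) *
        ((x 1 ω ⬝ᵥ θstar) * x 1 ω j - y 1 ω * x 1 ω j) ∂μ)
    (hStrPos : 0 < S.trace)
    (γ : ℕ → ℝ) (δ : ℝ) (hδ : 0 < δ)
    (hγ : ∀ t : ℕ, 1 ≤ t → 2 / M + δ ≤ γ t)
    (θ : ℕ → Ω → Fin n → ℝ)
    (hθ0 : ∀ ω, θ 0 ω = θstar)
    (hθrec : ∀ t : ℕ, 1 ≤ t → ∀ ω,
      θ t ω = θ (t - 1) ω - γ t • ((x t ω ⬝ᵥ θ (t - 1) ω) • x t ω - y t ω • x t ω)) :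
    Tendsto (fun t : ℕ => ∫ ω, (θ t ω - θstar) ⬝ᵥ (θ t ω - θstar) ∂μ) atTop atTop := by
  classical
  have hPm : ∀ t, Measurable (fun ω => (x t ω, y t ω)) := fun t => (hxm t).prodMk (hym t)
  have hxmi : ∀ t i, Measurable (fun ω => x t ω i) := fun t i =>
    (measurable_pi_apply i).comp (hxm t)
  set m' : ℕ → MeasurableSpace Ω :=
    fun s => MeasurableSpace.comap (fun ω => (x s ω, y s ω)) inferInstance with hm'
  have hms : ∀ s, m' s ≤ ‹MeasurableSpace Ω› := fun s => (hPm s).comap_le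
  -- coordinatewise recursion
  have hrec' : ∀ t : ℕ, 1 ≤ t → ∀ i, (fun ω => θ t ω i) = fun ω =>
      θ (t-1) ω i - γ t * (x t ω i * (x t ω ⬝ᵥ θ (t-1) ω) - x t ω i * y t ω) := by
    intro t ht i
    funext ω
    rw [hθrec t ht ω]
    simp only [Pi.sub_apply, Pi.smul_apply, smul_eq_mul]
    ring
  -- measurability of θ with respect to the past
  have hθm : ∀ t i, Measurable[⨆ s ∈ Set.Iic t, m' s] (fun ω => θ t ω i) := by
    intro t
    induction t with
    | zero =>
      intro i
      have : (fun ω => θ 0 ω i) = fun _ => θstar i := funext fun ω => by rw [hθ0]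
      rw [this]; exact measurable_const
    | succ t ih =>
      have hle : m' (t+1) ≤ ⨆ s ∈ Set.Iic (t+1), m' s := le_biSup _ (Set.mem_Iic.2 le_rfl)
      have hP : Measurable[⨆ s ∈ Set.Iic (t+1), m' s] (fun ω => (x (t+1) ω, y (t+1) ω)) :=
        Measurable.of_comap_le hle
      have hx : ∀ i, Measurable[⨆ s ∈ Set.Iic (t+1), m' s] (fun ω => x (t+1) ω i) :=
        fun i => ((measurable_pi_apply i).comp measurable_fst).comp hP
      have hy : Measurable[⨆ s ∈ Set.Iic (t+1), m' s] (y (t+1)) := measurable_snd.comp hP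
      have hmono : (⨆ s ∈ Set.Iic t, m' s) ≤ ⨆ s ∈ Set.Iic (t+1), m' s :=
        biSup_mono fun s hs => le_trans hs (Nat.le_succ t)
      have hprev : ∀ i, Measurable[⨆ s ∈ Set.Iic (t+1), m' s] (fun ω => θ t ω i) :=
        fun i => (ih i).mono hmono le_rfl
      intro i
      have := hrec' (t+1) (Nat.le_add_left 1 t) i
      simp only [Nat.add_sub_cancel] at this
      rw [this]
      have hdot : Measurable[⨆ s ∈ Set.Iic (t+1), m' s] (fun ω => x (t+1) ω ⬝ᵥ θ t ω) :=
        aux_meas_dot hx hprev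
      exact (hprev i).sub ((((hx i).mul hdot).sub ((hx i).mul hy)).const_mul _)
  have hsupt : ∀ t, (⨆ s ∈ Set.Iic t, m' s) ≤ ‹MeasurableSpace Ω› :=
    fun t => iSup₂_le fun s _ => hms s
  have hθmt : ∀ t i, Measurable (fun ω => θ t ω i) :=
    fun t i => (hθm t i).mono (hsupt t) le_rfl
  -- a.e. bounds on coordinates of x
  have hxb : ∀ t, 1 ≤ t → ∀ i, ∀ᵐ ω ∂μ, |x t ω i| ≤ Real.sqrt M := by
    intro t ht i
    filter_upwards [hnorm t ht] with ω h
    refine Real.abs_le_sqrt ?_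
    rw [← h]
    simp only [dotProduct]
    rw [pow_two]
    exact Finset.single_le_sum (f := fun j => x t ω j * x t ω j)
      (fun j _ => mul_self_nonneg _) (Finset.mem_univ i)
  have hxmem2 : ∀ t, 1 ≤ t → ∀ i, MemLp (fun ω => x t ω i) 2 μ := by
    intro t ht i
    refine MemLp.of_bound (hxmi t i).aestronglyMeasurable (Real.sqrt M) ?_
    filter_upwards [hxb t ht i] with ω h using by simpa [Real.norm_eq_abs] using h
  -- θ is L²
  have hθL2 : ∀ t i, MemLp (fun ω => θ t ω i) 2 μ := by
    intro t
    induction t with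
    | zero =>
      intro i
      have : (fun ω => θ 0 ω i) = fun _ => θstar i := funext fun ω => by rw [hθ0]
      rw [this]; exact memLp_const _
    | succ t ih =>
      intro i
      have hr := hrec' (t+1) (Nat.le_add_left 1 t) i
      simp only [Nat.add_sub_cancel] at hr
      rw [hr]
      have hdot : MemLp (fun ω => x (t+1) ω ⬝ᵥ θ t ω) 2 μ := by
        have : (fun ω => x (t+1) ω ⬝ᵥ θ t ω) = fun ω => ∑ j, x (t+1) ω j * θ t ω j := by
          funext ω; simp [dotProduct]
        rw [this]
        exact memLp_finset_sum _ fun j _ =>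
          aux_bdd_mul_mem2 (ih j) (hxmi (t+1) j).aestronglyMeasurable
            (hxb (t+1) (Nat.le_add_left 1 t) j)
      have h1 : MemLp (fun ω => x (t+1) ω i * (x (t+1) ω ⬝ᵥ θ t ω)) 2 μ :=
        aux_bdd_mul_mem2 hdot (hxmi (t+1) i).aestronglyMeasurable
          (hxb (t+1) (Nat.le_add_left 1 t) i)
      have h2 : MemLp (fun ω => x (t+1) ω i * y (t+1) ω) 2 μ :=
        aux_bdd_mul_mem2 (hyL2 (t+1)) (hxmi (t+1) i).aestronglyMeasurable
          (hxb (t+1) (Nat.le_add_left 1 t) i)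
      exact (ih i).sub (((h1.sub h2).const_mul _))
  -- independence machinery
  have hindepσ : ∀ t, 1 ≤ t → Indep (⨆ s ∈ Set.Iio t, m' s) (m' t) μ := by
    intro t ht
    have h := indep_biSup_compl hms hindep.iIndep (Set.Iio t)
    exact indep_of_indep_of_le_right h (le_biSup _ (by simp))
  have hindepF : ∀ t, 1 ≤ t → ∀ F : Ω → ℝ, Measurable[⨆ s ∈ Set.Iio t, m' s] F →
      ∀ φ : (Fin n → ℝ) × ℝ → ℝ, Measurable φ →
      IndepFun F (fun ω => φ (x t ω, y t ω)) μ := by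
    intro t ht F hF φ hφ
    rw [IndepFun_iff_Indep]
    refine indep_of_indep_of_le_left (indep_of_indep_of_le_right (hindepσ t ht) ?_) hF.comap_le
    exact (hφ.comp (Measurable.of_comap_le le_rfl)).comap_le
  -- identically distributed integrals
  have hIdInt : ∀ t, 1 ≤ t → ∀ φ : (Fin n → ℝ) × ℝ → ℝ, Measurable φ →
      ∫ ω, φ (x t ω, y t ω) ∂μ = ∫ ω, φ (x 1 ω, y 1 ω) ∂μ :=
    fun t ht φ hφ => ((hident t ht).comp hφ).integral_eq
  -- A θ* = b
  have hAθ : A *ᵥ θstar = b := by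
    have hdet : IsUnit A.det := isUnit_iff_ne_zero.2 (ne_of_gt hApd.det_pos)
    rw [hθstar, mulVec_mulVec, Matrix.mul_nonsing_inv _ hdet, one_mulVec]
  -- mean-zero property of the noise at the optimum
  have hmean0 : ∀ i, ∫ ω, (x 1 ω ⬝ᵥ θstar - y 1 ω) * x 1 ω i ∂μ = 0 := by
    intro i
    have hx2 := hxmem2 1 le_rfl
    have hint1 : ∀ j, Integrable (fun ω => θstar j * (x 1 ω j * x 1 ω i)) μ := fun j =>
      (aux_int_mul (hx2 j) (hx2 i)).const_mul _
    have hint2 : Integrable (fun ω => y 1 ω * x 1 ω i) μ := aux_int_mul (hyL2 1) (hx2 i)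
    have hre : (fun ω => (x 1 ω ⬝ᵥ θstar - y 1 ω) * x 1 ω i)
        = fun ω => (∑ j, θstar j * (x 1 ω j * x 1 ω i)) - y 1 ω * x 1 ω i := by
      funext ω
      simp only [dotProduct, Finset.sum_mul, sub_mul]
      congr 1
      exact Finset.sum_congr rfl fun j _ => by ring
    rw [hre, integral_sub (integrable_finset_sum _ fun j _ => hint1 j) hint2,
      integral_finset_sum _ fun j _ => hint1 j]
    have hxx : ∀ j, ∫ ω, θstar j * (x 1 ω j * x 1 ω i) ∂μ = A i j * θstar j := by
      intro j
      rw [integral_const_mul]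
      have : ∫ ω, x 1 ω j * x 1 ω i ∂μ = A i j := by
        rw [hA i j]
        congr 1; funext ω; ring
      rw [this]; ring
    have hyx : ∫ ω, y 1 ω * x 1 ω i ∂μ = b i := by
      rw [hb i]; congr 1; funext ω; ring
    rw [hyx]
    have : ∑ j, ∫ ω, θstar j * (x 1 ω j * x 1 ω i) ∂μ = (A *ᵥ θstar) i := by
      rw [Finset.sum_congr rfl fun j _ => hxx j]
      simp [Matrix.mulVec, dotProduct]
    rw [this, hAθ, sub_self]
  -- L² of the noise at time t
  have hwt : ∀ t, 1 ≤ t → MemLp (fun ω => x t ω ⬝ᵥ θstar - y t ω) 2 μ := by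
    intro t ht
    have hd : MemLp (fun ω => x t ω ⬝ᵥ θstar) 2 μ := by
      have : (fun ω => x t ω ⬝ᵥ θstar) = fun ω => ∑ j, θstar j * x t ω j := by
        funext ω; simp [dotProduct, mul_comm]
      rw [this]
      exact memLp_finset_sum _ fun j _ => (hxmem2 t ht j).const_mul _
    exact hd.sub (hyL2 t)
  -- trace identity
  have htr : ∫ ω, (x 1 ω ⬝ᵥ θstar - y 1 ω)^2 * (x 1 ω ⬝ᵥ x 1 ω) ∂μ = S.trace := by
    have hint : ∀ i, Integrable (fun ω =>
        ((x 1 ω ⬝ᵥ θstar - y 1 ω) * x 1 ω i) * ((x 1 ω ⬝ᵥ θstar - y 1 ω) * x 1 ω i)) μ := by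
      intro i
      have h := aux_bdd_mul_mem2 (hwt 1 le_rfl) (hxmi 1 i).aestronglyMeasurable
        (hxb 1 le_rfl i)
      have h' : MemLp (fun ω => (x 1 ω ⬝ᵥ θstar - y 1 ω) * x 1 ω i) 2 μ := by
        have : (fun ω => (x 1 ω ⬝ᵥ θstar - y 1 ω) * x 1 ω i)
            = fun ω => x 1 ω i * (x 1 ω ⬝ᵥ θstar - y 1 ω) := by funext ω; ring
        rw [this]; exact h
      exact aux_int_mul h' h'
    have hSd : ∀ i, S i i = ∫ ω,
        ((x 1 ω ⬝ᵥ θstar - y 1 ω) * x 1 ω i) * ((x 1 ω ⬝ᵥ θstar - y 1 ω) * x 1 ω i) ∂μ := by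
      intro i
      rw [hSdef i i]
      congr 1; funext ω; ring
    have : S.trace = ∫ ω, ∑ i, ((x 1 ω ⬝ᵥ θstar - y 1 ω) * x 1 ω i)
        * ((x 1 ω ⬝ᵥ θstar - y 1 ω) * x 1 ω i) ∂μ := by
      rw [Matrix.trace]
      simp only [Matrix.diag]
      rw [Finset.sum_congr rfl fun i _ => hSd i]
      exact (integral_finset_sum _ fun i _ => hint i).symm
    rw [this]
    congr 1; funext ω
    simp only [dotProduct, Finset.mul_sum]
    exact Finset.sum_congr rfl fun i _ => by ring
  -- the key one-step inequality
  have key : ∀ t, 1 ≤ t →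
      (∫ ω, (θ (t-1) ω - θstar) ⬝ᵥ (θ (t-1) ω - θstar) ∂μ) + (2/M+δ)^2 * S.trace ≤
      ∫ ω, (θ t ω - θstar) ⬝ᵥ (θ t ω - θstar) ∂μ := by
    intro t ht
    have hxC := hxb t ht
    have hEi : ∀ i, MemLp (fun ω => θ (t-1) ω i - θstar i) 2 μ :=
      fun i => (hθL2 (t-1) i).sub (memLp_const _)
    have hu : MemLp (fun ω => x t ω ⬝ᵥ (θ (t-1) ω - θstar)) 2 μ := by
      have heq : (fun ω => x t ω ⬝ᵥ (θ (t-1) ω - θstar))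
          = fun ω => ∑ j, x t ω j * (θ (t-1) ω j - θstar j) := by
        funext ω; simp [dotProduct]
      rw [heq]
      exact memLp_finset_sum _ fun j _ =>
        aux_bdd_mul_mem2 (hEi j) (hxmi t j).aestronglyMeasurable (hxC j)
    have hw : MemLp (fun ω => x t ω ⬝ᵥ θstar - y t ω) 2 μ := hwt t ht
    have hEE : Integrable (fun ω => (θ (t-1) ω - θstar) ⬝ᵥ (θ (t-1) ω - θstar)) μ := by
      have heq : (fun ω => (θ (t-1) ω - θstar) ⬝ᵥ (θ (t-1) ω - θstar))
          = fun ω => ∑ j, (θ (t-1) ω j - θstar j) * (θ (t-1) ω j - θstar j) := by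
        funext ω; simp [dotProduct]
      rw [heq]
      exact integrable_finset_sum _ fun j _ => aux_int_mul (hEi j) (hEi j)
    have hu2 : Integrable (fun ω => (x t ω ⬝ᵥ (θ (t-1) ω - θstar))
        * (x t ω ⬝ᵥ (θ (t-1) ω - θstar))) μ := aux_int_mul hu hu
    have huw : Integrable (fun ω => (x t ω ⬝ᵥ (θ (t-1) ω - θstar))
        * (x t ω ⬝ᵥ θstar - y t ω)) μ := aux_int_mul hu hw
    have hw2 : Integrable (fun ω => (x t ω ⬝ᵥ θstar - y t ω)
        * (x t ω ⬝ᵥ θstar - y t ω)) μ := aux_int_mul hw hw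
    have hpt : ∀ᵐ ω ∂μ, (θ t ω - θstar) ⬝ᵥ (θ t ω - θstar) =
        (θ (t-1) ω - θstar) ⬝ᵥ (θ (t-1) ω - θstar)
        + (γ t * γ t * M - 2 * γ t) * ((x t ω ⬝ᵥ (θ (t-1) ω - θstar)) * (x t ω ⬝ᵥ (θ (t-1) ω - θstar)))
        + (2 * γ t * γ t * M - 2 * γ t) * ((x t ω ⬝ᵥ (θ (t-1) ω - θstar)) * (x t ω ⬝ᵥ θstar - y t ω))
        + γ t * γ t * M * ((x t ω ⬝ᵥ θstar - y t ω) * (x t ω ⬝ᵥ θstar - y t ω)) := by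
      filter_upwards [hnorm t ht] with ω hMω
      have hθt : θ t ω - θstar = (θ (t-1) ω - θstar)
          - (γ t * ((x t ω ⬝ᵥ (θ (t-1) ω - θstar)) + (x t ω ⬝ᵥ θstar - y t ω))) • x t ω := by
        rw [hθrec t ht ω]
        funext i
        have hsplit : x t ω ⬝ᵥ θ (t-1) ω
            = (x t ω ⬝ᵥ (θ (t-1) ω - θstar)) + x t ω ⬝ᵥ θstar := by
          rw [dotProduct_sub]; ring
        simp only [Pi.sub_apply, Pi.smul_apply, smul_eq_mul, hsplit]
        ring
      rw [hθt, aux_expand _ _ _ _ _ _ rfl hMω]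
    have hsplit : ∫ ω, (θ t ω - θstar) ⬝ᵥ (θ t ω - θstar) ∂μ
        = (∫ ω, (θ (t-1) ω - θstar) ⬝ᵥ (θ (t-1) ω - θstar) ∂μ)
          + (γ t * γ t * M - 2 * γ t) * ∫ ω, (x t ω ⬝ᵥ (θ (t-1) ω - θstar)) * (x t ω ⬝ᵥ (θ (t-1) ω - θstar)) ∂μ
          + (2 * γ t * γ t * M - 2 * γ t) * ∫ ω, (x t ω ⬝ᵥ (θ (t-1) ω - θstar)) * (x t ω ⬝ᵥ θstar - y t ω) ∂μ
          + γ t * γ t * M * ∫ ω, (x t ω ⬝ᵥ θstar - y t ω) * (x t ω ⬝ᵥ θstar - y t ω) ∂μ := by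
      have hI1 : Integrable (fun ω => (θ (t-1) ω - θstar) ⬝ᵥ (θ (t-1) ω - θstar)
          + (γ t * γ t * M - 2 * γ t) * ((x t ω ⬝ᵥ (θ (t-1) ω - θstar)) * (x t ω ⬝ᵥ (θ (t-1) ω - θstar)))) μ :=
        hEE.add (hu2.const_mul _)
      have hI2 : Integrable (fun ω => (θ (t-1) ω - θstar) ⬝ᵥ (θ (t-1) ω - θstar)
          + (γ t * γ t * M - 2 * γ t) * ((x t ω ⬝ᵥ (θ (t-1) ω - θstar)) * (x t ω ⬝ᵥ (θ (t-1) ω - θstar)))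
          + (2 * γ t * γ t * M - 2 * γ t) * ((x t ω ⬝ᵥ (θ (t-1) ω - θstar)) * (x t ω ⬝ᵥ θstar - y t ω))) μ :=
        hI1.add (huw.const_mul _)
      rw [integral_congr_ae hpt]
      rw [integral_add hI2 (hw2.const_mul _), integral_add hI1 (huw.const_mul _),
        integral_add hEE (hu2.const_mul _),
        integral_const_mul, integral_const_mul, integral_const_mul]
    -- the cross term vanishes
    have hUW : ∫ ω, (x t ω ⬝ᵥ (θ (t-1) ω - θstar)) * (x t ω ⬝ᵥ θstar - y t ω) ∂μ = 0 := by
      have hre : (fun ω => (x t ω ⬝ᵥ (θ (t-1) ω - θstar)) * (x t ω ⬝ᵥ θstar - y t ω))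
          = fun ω => ∑ j, (θ (t-1) ω j - θstar j)
            * (x t ω j * (x t ω ⬝ᵥ θstar - y t ω)) := by
        funext ω
        simp only [dotProduct, Pi.sub_apply, Finset.sum_mul]
        exact Finset.sum_congr rfl fun j _ => by ring
      have hGj : ∀ j, MemLp (fun ω => x t ω j * (x t ω ⬝ᵥ θstar - y t ω)) 2 μ :=
        fun j => aux_bdd_mul_mem2 hw (hxmi t j).aestronglyMeasurable (hxC j)
      have hterm_int : ∀ j, Integrable (fun ω => (θ (t-1) ω j - θstar j)
          * (x t ω j * (x t ω ⬝ᵥ θstar - y t ω))) μ :=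
        fun j => aux_int_mul (hEi j) (hGj j)
      rw [hre, integral_finset_sum _ fun j _ => hterm_int j]
      refine Finset.sum_eq_zero fun j _ => ?_
      have hφm : Measurable (fun p : (Fin n → ℝ) × ℝ => p.1 j * (p.1 ⬝ᵥ θstar - p.2)) := by
        have hd : Measurable (fun p : (Fin n → ℝ) × ℝ => p.1 ⬝ᵥ θstar) := by
          simp only [dotProduct]
          exact Finset.measurable_sum _ fun i _ =>
            ((measurable_pi_apply i).comp measurable_fst).mul measurable_const
        exact ((measurable_pi_apply j).comp measurable_fst).mul (hd.sub measurable_snd)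
      have hFm : Measurable[⨆ s ∈ Set.Iio t, m' s] (fun ω => θ (t-1) ω j - θstar j) := by
        have hsub : (⨆ s ∈ Set.Iic (t-1), m' s) ≤ ⨆ s ∈ Set.Iio t, m' s :=
          biSup_mono fun s hs => by
            simp only [Set.mem_Iic, Set.mem_Iio] at *; omega
        exact ((hθm (t-1) j).mono hsub le_rfl).sub measurable_const
      have hind : IndepFun (fun ω => θ (t-1) ω j - θstar j)
          (fun ω => x t ω j * (x t ω ⬝ᵥ θstar - y t ω)) μ :=
        hindepF t ht _ hFm _ hφm
      have hInt : ∫ ω, (θ (t-1) ω j - θstar j) * (x t ω j * (x t ω ⬝ᵥ θstar - y t ω)) ∂μ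
          = (∫ ω, (θ (t-1) ω j - θstar j) ∂μ)
            * ∫ ω, x t ω j * (x t ω ⬝ᵥ θstar - y t ω) ∂μ :=
        hind.integral_fun_mul_eq_mul_integral (hEi j).aestronglyMeasurable (hGj j).aestronglyMeasurable
      have h0 : ∫ ω, x t ω j * (x t ω ⬝ᵥ θstar - y t ω) ∂μ = 0 := by
        have := hIdInt t ht _ hφm
        rw [this, ← hmean0 j]
        congr 1; funext ω; ring
      rw [hInt, h0, mul_zero]
    -- the noise term equals the trace
    have hW2 : M * ∫ ω, (x t ω ⬝ᵥ θstar - y t ω) * (x t ω ⬝ᵥ θstar - y t ω) ∂μ = S.trace := by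
      have hφm : Measurable (fun p : (Fin n → ℝ) × ℝ => (p.1 ⬝ᵥ θstar - p.2)^2 * (p.1 ⬝ᵥ p.1)) := by
        have hd : Measurable (fun p : (Fin n → ℝ) × ℝ => p.1 ⬝ᵥ θstar) := by
          simp only [dotProduct]
          exact Finset.measurable_sum _ fun i _ =>
            ((measurable_pi_apply i).comp measurable_fst).mul measurable_const
        have hdd : Measurable (fun p : (Fin n → ℝ) × ℝ => p.1 ⬝ᵥ p.1) := by
          simp only [dotProduct]
          exact Finset.measurable_sum _ fun i _ =>
            ((measurable_pi_apply i).comp measurable_fst).mul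
              ((measurable_pi_apply i).comp measurable_fst)
        exact ((hd.sub measurable_snd).pow_const 2).mul hdd
      have h1 : ∫ ω, (x t ω ⬝ᵥ θstar - y t ω)^2 * (x t ω ⬝ᵥ x t ω) ∂μ = S.trace :=
        (hIdInt t ht _ hφm).trans htr
      have h2 : ∀ᵐ ω ∂μ, ((x t ω ⬝ᵥ θstar - y t ω) * (x t ω ⬝ᵥ θstar - y t ω)) * M
          = (x t ω ⬝ᵥ θstar - y t ω)^2 * (x t ω ⬝ᵥ x t ω) := by
        filter_upwards [hnorm t ht] with ω hMω
        rw [hMω]; ring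
      rw [mul_comm, ← integral_mul_const, integral_congr_ae h2, h1]
    rw [hsplit, hUW, mul_zero, add_zero]
    have huu_nonneg : 0 ≤ ∫ ω, (x t ω ⬝ᵥ (θ (t-1) ω - θstar)) * (x t ω ⬝ᵥ (θ (t-1) ω - θstar)) ∂μ :=
      integral_nonneg fun ω => mul_self_nonneg _
    have hgl : 2 / M + δ ≤ γ t := hγ t ht
    have hgpos : 0 < γ t := lt_of_lt_of_le (by positivity) hgl
    have h2M : 2 / M * M = 2 := by field_simp
    have hgM : 2 < γ t * M := by nlinarith
    have hcoef : 0 ≤ γ t * γ t * M - 2 * γ t := by nlinarith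
    have hterm : (2/M+δ)^2 * S.trace ≤ γ t * γ t * M
        * ∫ ω, (x t ω ⬝ᵥ θstar - y t ω) * (x t ω ⬝ᵥ θstar - y t ω) ∂μ := by
      have heq : γ t * γ t * M * ∫ ω, (x t ω ⬝ᵥ θstar - y t ω) * (x t ω ⬝ᵥ θstar - y t ω) ∂μ
          = γ t * γ t * S.trace := by
        rw [mul_assoc, hW2]
      rw [heq]
      have hbpos : 0 < 2/M + δ := by positivity
      have hsq : (2/M+δ)^2 ≤ γ t * γ t := by
        rw [pow_two]; exact mul_le_mul hgl hgl hbpos.le hgpos.le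
      nlinarith
    nlinarith [mul_nonneg hcoef huu_nonneg]
  -- conclusion
  have hF0 : ∫ ω, (θ 0 ω - θstar) ⬝ᵥ (θ 0 ω - θstar) ∂μ = 0 := by
    have : (fun ω => (θ 0 ω - θstar) ⬝ᵥ (θ 0 ω - θstar)) = fun _ => 0 := by
      funext ω; rw [hθ0]; simp
    rw [this, integral_const]; simp
  set c : ℝ := (2/M+δ)^2 * S.trace with hc
  have hcpos : 0 < c := by
    apply mul_pos _ hStrPos
    positivity
  have hlow : ∀ t : ℕ, c * t ≤ ∫ ω, (θ t ω - θstar) ⬝ᵥ (θ t ω - θstar) ∂μ := by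
    intro t
    induction t with
    | zero => simpa using hF0.ge
    | succ t ih =>
      have h := key (t+1) (Nat.le_add_left 1 t)
      simp only [Nat.add_sub_cancel] at h
      have : c * ((t:ℝ)+1) = c * t + c := by ring
      rw [Nat.cast_add, Nat.cast_one, this]
      calc c * t + c ≤ (∫ ω, (θ t ω - θstar) ⬝ᵥ (θ t ω - θstar) ∂μ) + c :=
            add_le_add_left ih c
        _ ≤ _ := h
  refine tendsto_atTop_mono hlow ?_
  exact Tendsto.const_mul_atTop hcpos tendsto_natCast_atTop_atTop
end

section
/- Let (x_t, y_t)_{t≥1} be an i.i.d. sequence of random pairs in ℝ^n × ℝ with ‖x_t‖² = M almost surely for a constant M > 0; suppose A = E(x·xᵀ) is positive definite, set b = E(x·y), θ* = A⁻¹b, S = E((x·xᵀ·θ* − x·y)(x·xᵀ·θ* − x·y)ᵀ), and u = E(x·xᵀ·(x·xᵀ·θ* − x·y)). Let θ_t = θ_{t−1} − γ_t·(x_t·x_tᵀ·θ_{t−1} − x_t·y_t) with (γ_t) deterministic and θ_0 deterministic, let ℱ_{t−1} be the σ-algebra generated by (x_1, y_1), …, (x_{t−1}, y_{t−1}), and write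 Δ_t = θ_t − θ*. Then almost surely: E(‖Δ_t‖² | ℱ_{t−1}) = ‖Δ_{t−1}‖² − (2γ_t − M·γ_t²)·‖Δ_{t−1}‖_A² + γ_t²·tr(S) + 2γ_t²·uᵀΔ_{t−1}. -/
open Matrix MeasureTheory ProbabilityTheory

lemma condExp_mul_indep' {Ω : Type*} {m0 : MeasurableSpace Ω} {μ : Measure Ω}
    [IsProbabilityMeasure μ]
    {m mz : MeasurableSpace Ω} (hm : m ≤ m0) (hmz : mz ≤ m0)
    (hindep : Indep mz m μ)
    {c Z : Ω → ℝ} (hc : StronglyMeasurable[m] c) (hZ : StronglyMeasurable[mz] Z)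
    (hcZ : Integrable (fun ω => c ω * Z ω) μ) (hZi : Integrable Z μ) :
    μ[fun ω => c ω * Z ω | m] =ᵐ[μ] fun ω => c ω * ∫ ω', Z ω' ∂μ := by
  have h1 : μ[fun ω => c ω * Z ω | m] =ᵐ[μ] c * μ[Z|m] :=
    condExp_mul_of_stronglyMeasurable_left hc hcZ hZi
  have h2 : μ[Z|m] =ᵐ[μ] fun _ => ∫ ω', Z ω' ∂μ := condExp_indep_eq hmz hm hZ hindep
  filter_upwards [h1, h2] with ω h1 h2
  simp only [h1, Pi.mul_apply, h2]

lemma int_mul_of_L2 {Ω : Type*} {m0 : MeasurableSpace Ω} {μ : Measure Ω}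
    {f g : Ω → ℝ} (hf : MemLp f 2 μ) (hg : MemLp g 2 μ) :
    Integrable (fun ω => f ω * g ω) μ := by
  have := hf.smul hg (p := 2) (q := 2) (r := 1)
  rw [← memLp_one_iff_integrable]
  convert this using 1
  funext ω; simp [mul_comm]

lemma memL2_bddmul {Ω : Type*} {m0 : MeasurableSpace Ω} {μ : Measure Ω}
    {f g : Ω → ℝ} {C : ℝ} (hg : AEStronglyMeasurable g μ)
    (hb : ∀ᵐ ω ∂μ, ‖g ω‖ ≤ C) (hf : MemLp f 2 μ) :
    MemLp (fun ω => g ω * f ω) 2 μ := by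
  have hgtop : MemLp g ⊤ μ := memLp_top_of_bound hg C hb
  have := MemLp.smul (p := ⊤) (q := 2) (r := 2) hf hgtop
  convert this using 1
  funext ω; simp

lemma measurable_pi_lambda' {Ω : Type*} {m : MeasurableSpace Ω} {n : ℕ}
    (f : Ω → Fin n → ℝ) (hf : ∀ i, Measurable[m] fun ω => f ω i) :
    Measurable[m] f := measurable_pi_lambda f hf

lemma sgd_aux {n : ℕ} {Ω : Type*} {m0 : MeasurableSpace Ω} {μ : Measure Ω}
    [IsProbabilityMeasure μ]
    {𝒢 mz : MeasurableSpace Ω} (hle : 𝒢 ≤ m0) (hmzle : mz ≤ m0)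
    (hindep : Indep mz 𝒢 μ)
    (X : Ω → Fin n → ℝ) (Y : Ω → ℝ)
    (hXmz : Measurable[mz] X) (hYmz : Measurable[mz] Y)
    (hYL2 : MemLp Y 2 μ)
    (M : ℝ) (hM : 0 < M) (hXnorm : ∀ᵐ ω ∂μ, X ω ⬝ᵥ X ω = M)
    (θprev : Ω → Fin n → ℝ) (hθprevm : Measurable[𝒢] θprev)
    (hθprevL2 : ∀ i, MemLp (fun ω => θprev ω i) 2 μ)
    (θstar : Fin n → ℝ) (c : ℝ)
    (A : Matrix (Fin n) (Fin n) ℝ)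
    (hA' : ∀ j k, (∫ ω, X ω j * X ω k ∂μ) = A j k)
    (u : Fin n → ℝ)
    (hu' : ∀ j, (∫ ω, (X ω ⬝ᵥ ((X ω ⬝ᵥ θstar) • X ω - Y ω • X ω)) * X ω j ∂μ) = u j)
    (hξ0 : ∀ j, (∫ ω, ((X ω ⬝ᵥ θstar) * X ω j - Y ω * X ω j) ∂μ) = 0)
    (trS : ℝ)
    (hξξ : (∫ ω, ((X ω ⬝ᵥ θstar) • X ω - Y ω • X ω) ⬝ᵥ
        ((X ω ⬝ᵥ θstar) • X ω - Y ω • X ω) ∂μ) = trS) :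
    μ[fun ω => ((θprev ω - c • ((X ω ⬝ᵥ θprev ω) • X ω - Y ω • X ω)) - θstar) ⬝ᵥ
        ((θprev ω - c • ((X ω ⬝ᵥ θprev ω) • X ω - Y ω • X ω)) - θstar) | 𝒢] =ᵐ[μ]
      fun ω =>
        (θprev ω - θstar) ⬝ᵥ (θprev ω - θstar)
          - (2 * c - M * c ^ 2) * ((θprev ω - θstar) ⬝ᵥ A *ᵥ (θprev ω - θstar))
          + c ^ 2 * trS
          + 2 * c ^ 2 * (u ⬝ᵥ (θprev ω - θstar)) := by
  set K : ℝ := M * c^2 - 2*c with hK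
  set d : Ω → Fin n → ℝ := fun ω => θprev ω - θstar with hd
  set ξ : Ω → Fin n → ℝ := fun ω => (X ω ⬝ᵥ θstar) • X ω - Y ω • X ω with hξdef
  set Z2 : Fin n × Fin n → Ω → ℝ := fun p ω => K * (X ω p.1 * X ω p.2) with hZ2
  set Z1 : Fin n → Ω → ℝ :=
    fun j ω => -(2*c) * ξ ω j + 2*c^2 * ((X ω ⬝ᵥ ξ ω) * X ω j) with hZ1
  set Z0 : Ω → ℝ := fun ω => c^2 * (ξ ω ⬝ᵥ ξ ω) with hZ0
  -- componentwise bound on X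
  have hXb : ∀ i, ∀ᵐ ω ∂μ, ‖X ω i‖ ≤ Real.sqrt M := by
    intro i
    filter_upwards [hXnorm] with ω hω
    rw [Real.norm_eq_abs]
    apply Real.abs_le_sqrt
    rw [← hω]
    simp only [dotProduct, sq]
    exact Finset.single_le_sum (f := fun j => X ω j * X ω j)
      (fun j _ => mul_self_nonneg _) (Finset.mem_univ i)
  have hXm0 : Measurable[m0] X := hXmz.mono hmzle le_rfl
  have hYm0 : Measurable[m0] Y := hYmz.mono hmzle le_rfl
  have hXim : ∀ i, Measurable[m0] (fun ω => X ω i) := fun i => (measurable_pi_apply i).comp hXm0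
  have hXimz : ∀ i, Measurable[mz] (fun ω => X ω i) := fun i => (measurable_pi_apply i).comp hXmz
  -- L2 facts
  have hdL2 : ∀ i, MemLp (fun ω => d ω i) 2 μ := fun i =>
    (hθprevL2 i).sub (memLp_const (θstar i))
  have hdotb : ∀ᵐ ω ∂μ, ‖X ω ⬝ᵥ θstar‖ ≤ Real.sqrt M * ∑ k, ‖θstar k‖ := by
    have := ae_all_iff.mpr hXb
    filter_upwards [this] with ω hω
    calc ‖X ω ⬝ᵥ θstar‖ ≤ ∑ k, ‖X ω k * θstar k‖ := norm_sum_le _ _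
    _ ≤ ∑ k, Real.sqrt M * ‖θstar k‖ := by
        refine Finset.sum_le_sum fun k _ => ?_
        rw [norm_mul]
        exact mul_le_mul_of_nonneg_right (hω k) (norm_nonneg _)
    _ = Real.sqrt M * ∑ k, ‖θstar k‖ := by rw [Finset.mul_sum]
  have hXiL2 : ∀ i, MemLp (fun ω => X ω i) 2 μ := fun i =>
    MemLp.of_bound (hXim i).aestronglyMeasurable _ (hXb i)
  have hdotm : Measurable[m0] (fun ω => X ω ⬝ᵥ θstar) := by
    have : Measurable[m0] (fun ω => ∑ k, X ω k * θstar k) :=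
      Finset.measurable_sum _ fun k _ => (hXim k).mul measurable_const
    exact this
  have hξL2 : ∀ i, MemLp (fun ω => ξ ω i) 2 μ := by
    intro i
    have h1 : MemLp (fun ω => (X ω ⬝ᵥ θstar) * X ω i) 2 μ :=
      memL2_bddmul hdotm.aestronglyMeasurable hdotb (hXiL2 i)
    have h2 : MemLp (fun ω => X ω i * Y ω) 2 μ :=
      memL2_bddmul (hXim i).aestronglyMeasurable (hXb i) hYL2
    have h2' : MemLp (fun ω => Y ω * X ω i) 2 μ :=
      h2.ae_eq (Filter.Eventually.of_forall fun ω => mul_comm _ _)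
    exact h1.sub h2'
  -- L2 of (X ⬝ᵥ ξ) * X j
  have hvξL2 : ∀ j, MemLp (fun ω => (X ω ⬝ᵥ ξ ω) * X ω j) 2 μ := by
    intro j
    have hsum : MemLp (fun ω => ∑ k, (X ω k * X ω j) * ξ ω k) 2 μ := by
      refine memLp_finset_sum _ fun k _ => ?_
      refine memL2_bddmul (C := Real.sqrt M * Real.sqrt M) (((hXim k).mul (hXim j)).aestronglyMeasurable) ?_ (hξL2 k)
      filter_upwards [hXb k, hXb j] with ω h1 h2
      calc ‖X ω k * X ω j‖ = ‖X ω k‖ * ‖X ω j‖ := norm_mul _ _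
      _ ≤ Real.sqrt M * Real.sqrt M :=
          mul_le_mul h1 h2 (norm_nonneg _) (Real.sqrt_nonneg M)
    refine hsum.ae_eq (Filter.Eventually.of_forall fun ω => ?_)
    simp only [dotProduct, Finset.sum_mul]
    exact Finset.sum_congr rfl fun k _ => by ring
  have hZ1L2 : ∀ j, MemLp (Z1 j) 2 μ := fun j =>
    ((hξL2 j).const_mul _).add ((hvξL2 j).const_mul _)
  -- measurability in 𝒢
  have hdm : ∀ i, Measurable[𝒢] (fun ω => d ω i) := fun i =>
    Measurable.sub (m := 𝒢) ((measurable_pi_apply i).comp hθprevm) measurable_const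
  -- measurability of the Z's in mz
  have hdotmz : Measurable[mz] (fun ω => X ω ⬝ᵥ θstar) := by
    have : Measurable[mz] (fun ω => ∑ k, X ω k * θstar k) :=
      Finset.measurable_sum _ fun k _ => (hXimz k).mul measurable_const
    exact this
  have hξmz : ∀ i, Measurable[mz] (fun ω => ξ ω i) := fun i =>
    (hdotmz.mul (hXimz i)).sub (hYmz.mul (hXimz i))
  have hdotξmz : Measurable[mz] (fun ω => X ω ⬝ᵥ ξ ω) := by
    have : Measurable[mz] (fun ω => ∑ k, X ω k * ξ ω k) :=
      Finset.measurable_sum _ fun k _ => (hXimz k).mul (hξmz k)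
    exact this
  have hsmZ2 : ∀ p : Fin n × Fin n, StronglyMeasurable[mz] (Z2 p) := fun p =>
    (Measurable.const_mul ((hXimz p.1).mul (hXimz p.2)) K).stronglyMeasurable
  have hsmZ1 : ∀ j, StronglyMeasurable[mz] (Z1 j) := fun j =>
    ((Measurable.const_mul (hξmz j) _).add
      (Measurable.const_mul (hdotξmz.mul (hXimz j)) _)).stronglyMeasurable
  have hsmZ0 : StronglyMeasurable[mz] Z0 := by
    have : Measurable[mz] (fun ω => c^2 * ∑ k, ξ ω k * ξ ω k) :=
      Measurable.const_mul (Finset.measurable_sum _ fun k _ => (hξmz k).mul (hξmz k)) _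
    exact this.stronglyMeasurable
  -- integrability
  have hIZ2 : ∀ p : Fin n × Fin n, Integrable (Z2 p) μ := by
    intro p
    rw [← memLp_one_iff_integrable]
    refine MemLp.of_bound (((hXim p.1).mul (hXim p.2)).const_mul K).aestronglyMeasurable
      (‖K‖ * (Real.sqrt M * Real.sqrt M)) ?_
    filter_upwards [hXb p.1, hXb p.2] with ω h1 h2
    calc ‖K * (X ω p.1 * X ω p.2)‖ = ‖K‖ * (‖X ω p.1‖ * ‖X ω p.2‖) := by
          rw [norm_mul, norm_mul]
    _ ≤ ‖K‖ * (Real.sqrt M * Real.sqrt M) := by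
          refine mul_le_mul_of_nonneg_left ?_ (norm_nonneg K)
          exact mul_le_mul h1 h2 (norm_nonneg _) (Real.sqrt_nonneg M)
  have hIc2Z2 : ∀ p : Fin n × Fin n,
      Integrable (fun ω => (d ω p.1 * d ω p.2) * Z2 p ω) μ := by
    intro p
    have hg : Integrable (fun ω => d ω p.1 * d ω p.2) μ :=
      int_mul_of_L2 (hdL2 p.1) (hdL2 p.2)
    have := Integrable.bdd_mul (c := ‖K‖ * (Real.sqrt M * Real.sqrt M)) hg
      (((hXim p.1).mul (hXim p.2)).const_mul K).aestronglyMeasurable ?_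
    · exact this.congr (Filter.Eventually.of_forall fun ω => mul_comm _ _)
    · filter_upwards [hXb p.1, hXb p.2] with ω h1 h2
      calc ‖K * (X ω p.1 * X ω p.2)‖ = ‖K‖ * (‖X ω p.1‖ * ‖X ω p.2‖) := by
            rw [norm_mul, norm_mul]
      _ ≤ ‖K‖ * (Real.sqrt M * Real.sqrt M) := by
            refine mul_le_mul_of_nonneg_left ?_ (norm_nonneg K)
            exact mul_le_mul h1 h2 (norm_nonneg _) (Real.sqrt_nonneg M)
  have hIZ1 : ∀ j, Integrable (Z1 j) μ := fun j => (hZ1L2 j).integrable one_le_two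
  have hIc1Z1 : ∀ j, Integrable (fun ω => d ω j * Z1 j ω) μ := fun j =>
    int_mul_of_L2 (hdL2 j) (hZ1L2 j)
  have hIZ0 : Integrable Z0 μ := by
    have : Integrable (fun ω => c^2 * ∑ k, ξ ω k * ξ ω k) μ :=
      (integrable_finset_sum _ fun k _ => int_mul_of_L2 (hξL2 k) (hξL2 k)).const_mul _
    refine this.congr (Filter.Eventually.of_forall fun ω => ?_)
    simp only [hZ0, dotProduct]
  have hIF1 : Integrable (fun ω => d ω ⬝ᵥ d ω) μ := by
    have : Integrable (fun ω => ∑ k, d ω k * d ω k) μ :=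
      integrable_finset_sum _ fun k _ => int_mul_of_L2 (hdL2 k) (hdL2 k)
    refine this.congr (Filter.Eventually.of_forall fun ω => ?_)
    simp only [dotProduct]
  -- pointwise decomposition
  have hdecomp : (fun ω => ((θprev ω - c • ((X ω ⬝ᵥ θprev ω) • X ω - Y ω • X ω)) - θstar) ⬝ᵥ
        ((θprev ω - c • ((X ω ⬝ᵥ θprev ω) • X ω - Y ω • X ω)) - θstar)) =ᵐ[μ]
      (fun ω => (d ω ⬝ᵥ d ω) + (∑ p : Fin n × Fin n, (d ω p.1 * d ω p.2) * Z2 p ω)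
        + (∑ j, d ω j * Z1 j ω) + Z0 ω) := by
    filter_upwards [hXnorm] with ω hω
    have hsub : (θprev ω - c • ((X ω ⬝ᵥ θprev ω) • X ω - Y ω • X ω)) - θstar
        = d ω - c • ((X ω ⬝ᵥ θprev ω) • X ω - Y ω • X ω) := by
      simp only [hd]; abel
    have hθeq : θprev ω = d ω + θstar := by simp [hd]
    have hgsplit : (X ω ⬝ᵥ θprev ω) • X ω - Y ω • X ω = (X ω ⬝ᵥ d ω) • X ω + ξ ω := by
      conv_lhs => rw [hθeq]
      rw [dotProduct_add, add_smul]
      simp only [hξdef]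
      abel
    rw [hsub, hgsplit]
    have key : (d ω - c • ((X ω ⬝ᵥ d ω) • X ω + ξ ω)) ⬝ᵥ
          (d ω - c • ((X ω ⬝ᵥ d ω) • X ω + ξ ω))
        = d ω ⬝ᵥ d ω
          - 2*c*((X ω ⬝ᵥ d ω)*(X ω ⬝ᵥ d ω) + d ω ⬝ᵥ ξ ω)
          + c^2*((X ω ⬝ᵥ d ω)*(X ω ⬝ᵥ d ω)*M
              + 2*(X ω ⬝ᵥ d ω)*(X ω ⬝ᵥ ξ ω) + ξ ω ⬝ᵥ ξ ω) := by
      simp only [sub_dotProduct, dotProduct_sub, add_dotProduct, dotProduct_add,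
        smul_dotProduct, dotProduct_smul, smul_eq_mul]
      rw [dotProduct_comm (d ω) (X ω), dotProduct_comm (ξ ω) (d ω),
        dotProduct_comm (ξ ω) (X ω), hω]
      ring
    rw [key]
    have h2sum : ∑ p : Fin n × Fin n, (d ω p.1 * d ω p.2) * Z2 p ω
        = K * ((X ω ⬝ᵥ d ω)*(X ω ⬝ᵥ d ω)) := by
      rw [Fintype.sum_prod_type]
      have e1 : ∀ j, (∑ k, (d ω j * d ω k) * Z2 (j,k) ω)
          = (K * (X ω j * d ω j)) * ∑ k, X ω k * d ω k := by
        intro j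
        rw [Finset.mul_sum]
        refine Finset.sum_congr rfl fun k _ => ?_
        simp only [hZ2]; ring
      rw [Finset.sum_congr rfl fun j _ => e1 j, ← Finset.sum_mul]
      have e2 : (∑ j, K * (X ω j * d ω j)) = K * ∑ j, X ω j * d ω j := by
        rw [Finset.mul_sum]
      rw [e2]
      simp only [dotProduct]
      ring
    have h1sum : ∑ j, d ω j * Z1 j ω
        = -(2*c)*(d ω ⬝ᵥ ξ ω) + 2*c^2*((X ω ⬝ᵥ ξ ω)*(X ω ⬝ᵥ d ω)) := by
      have e1 : ∀ j, d ω j * Z1 j ω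
          = -(2*c)*(d ω j * ξ ω j) + (2*c^2*(X ω ⬝ᵥ ξ ω))*(X ω j * d ω j) := by
        intro j; simp only [hZ1]; ring
      rw [Finset.sum_congr rfl fun j _ => e1 j, Finset.sum_add_distrib,
        ← Finset.mul_sum, ← Finset.mul_sum]
      simp only [dotProduct]
      ring
    rw [h2sum, h1sum]
    simp only [hZ0, hK]
    ring
  -- means
  have hmean2 : ∀ p : Fin n × Fin n, (∫ ω, Z2 p ω ∂μ) = K * A p.1 p.2 := by
    intro p
    simp only [hZ2]
    rw [integral_const_mul, hA' p.1 p.2]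
  have hmean1 : ∀ j, (∫ ω, Z1 j ω ∂μ) = 2*c^2 * u j := by
    intro j
    have hint1 : Integrable (fun ω => -(2*c) * ξ ω j) μ :=
      ((hξL2 j).integrable one_le_two).const_mul _
    have hint2 : Integrable (fun ω => 2*c^2 * ((X ω ⬝ᵥ ξ ω) * X ω j)) μ :=
      ((hvξL2 j).integrable one_le_two).const_mul _
    simp only [hZ1]
    rw [integral_add hint1 hint2, integral_const_mul, integral_const_mul]
    have hξ0' : (∫ ω, ξ ω j ∂μ) = 0 := by
      simp only [hξdef, Pi.sub_apply, Pi.smul_apply, smul_eq_mul]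
      exact hξ0 j
    have hu'' : (∫ ω, (X ω ⬝ᵥ ξ ω) * X ω j ∂μ) = u j := by
      simp only [hξdef]
      exact hu' j
    rw [hξ0', hu'']
    ring
  have hmean0 : (∫ ω, Z0 ω ∂μ) = c^2 * trS := by
    simp only [hZ0]
    rw [integral_const_mul]
    simp only [hξdef]
    rw [hξξ]
  -- 𝒢-strongly measurable coefficients
  have hsmc2 : ∀ p : Fin n × Fin n,
      StronglyMeasurable[𝒢] (fun ω => d ω p.1 * d ω p.2) := fun p =>
    ((hdm p.1).mul (hdm p.2)).stronglyMeasurable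
  have hsmc1 : ∀ j, StronglyMeasurable[𝒢] (fun ω => d ω j) := fun j =>
    (hdm j).stronglyMeasurable
  have hsmF1 : StronglyMeasurable[𝒢] (fun ω => d ω ⬝ᵥ d ω) := by
    have h : Measurable[𝒢] (fun ω => ∑ k, d ω k * d ω k) :=
      Finset.measurable_sum _ fun k _ => (hdm k).mul (hdm k)
    exact h.stronglyMeasurable
  -- conditional expectations of each piece
  haveI : SigmaFinite (μ.trim hle) := by infer_instance
  have e1 : μ[(fun ω => d ω ⬝ᵥ d ω)|𝒢] = fun ω => d ω ⬝ᵥ d ω :=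
    condExp_of_stronglyMeasurable hle hsmF1 hIF1
  have e2 : μ[(fun ω => ∑ p : Fin n × Fin n, (d ω p.1 * d ω p.2) * Z2 p ω)|𝒢]
      =ᵐ[μ] fun ω => ∑ p : Fin n × Fin n, (d ω p.1 * d ω p.2) * (K * A p.1 p.2) := by
    have hGeq : (fun ω => ∑ p : Fin n × Fin n, (d ω p.1 * d ω p.2) * Z2 p ω)
        = ∑ p : Fin n × Fin n, (fun ω => (d ω p.1 * d ω p.2) * Z2 p ω) := by
      funext ω; rw [Finset.sum_apply]
    rw [hGeq]
    refine (condExp_finset_sum (fun p _ => hIc2Z2 p) 𝒢).trans ?_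
    have hp : ∀ p : Fin n × Fin n, μ[(fun ω => (d ω p.1 * d ω p.2) * Z2 p ω)|𝒢]
        =ᵐ[μ] fun ω => (d ω p.1 * d ω p.2) * (K * A p.1 p.2) := by
      intro p
      have h := condExp_mul_indep' hle hmzle hindep (hsmc2 p) (hsmZ2 p) (hIc2Z2 p) (hIZ2 p)
      rw [hmean2 p] at h
      exact h
    have hall := ae_all_iff.mpr hp
    filter_upwards [hall] with ω hω
    rw [Finset.sum_apply]
    exact Finset.sum_congr rfl fun p _ => hω p
  have e3 : μ[(fun ω => ∑ j, d ω j * Z1 j ω)|𝒢]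
      =ᵐ[μ] fun ω => ∑ j, d ω j * (2*c^2 * u j) := by
    have hGeq : (fun ω => ∑ j, d ω j * Z1 j ω)
        = ∑ j, (fun ω => d ω j * Z1 j ω) := by
      funext ω; rw [Finset.sum_apply]
    rw [hGeq]
    refine (condExp_finset_sum (fun j _ => hIc1Z1 j) 𝒢).trans ?_
    have hp : ∀ j, μ[(fun ω => d ω j * Z1 j ω)|𝒢]
        =ᵐ[μ] fun ω => d ω j * (2*c^2 * u j) := by
      intro j
      have h := condExp_mul_indep' hle hmzle hindep (hsmc1 j) (hsmZ1 j) (hIc1Z1 j) (hIZ1 j)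
      rw [hmean1 j] at h
      exact h
    have hall := ae_all_iff.mpr hp
    filter_upwards [hall] with ω hω
    rw [Finset.sum_apply]
    exact Finset.sum_congr rfl fun j _ => hω j
  have e4 : μ[Z0|𝒢] =ᵐ[μ] fun _ => c^2 * trS := by
    have h := condExp_indep_eq hmzle hle hsmZ0 hindep
    rw [hmean0] at h
    exact h
  -- combine
  refine (condExp_congr_ae hdecomp).trans ?_
  have hIG2 : Integrable (fun ω => ∑ p : Fin n × Fin n, (d ω p.1 * d ω p.2) * Z2 p ω) μ :=
    integrable_finset_sum _ fun p _ => hIc2Z2 p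
  have hIG3 : Integrable (fun ω => ∑ j, d ω j * Z1 j ω) μ :=
    integrable_finset_sum _ fun j _ => hIc1Z1 j
  have hsplit : (fun ω => (d ω ⬝ᵥ d ω)
        + (∑ p : Fin n × Fin n, (d ω p.1 * d ω p.2) * Z2 p ω)
        + (∑ j, d ω j * Z1 j ω) + Z0 ω)
      = (((fun ω => d ω ⬝ᵥ d ω)
        + (fun ω => ∑ p : Fin n × Fin n, (d ω p.1 * d ω p.2) * Z2 p ω))
        + (fun ω => ∑ j, d ω j * Z1 j ω)) + Z0 := rfl
  rw [hsplit]
  have hadd1 := condExp_add (μ := μ) (m := 𝒢) ((hIF1.add hIG2).add hIG3) hIZ0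
  have hadd2 := condExp_add (μ := μ) (m := 𝒢) (hIF1.add hIG2) hIG3
  have hadd3 := condExp_add (μ := μ) (m := 𝒢) hIF1 hIG2
  refine hadd1.trans ?_
  filter_upwards [hadd2, hadd3, e2, e3, e4] with ω h2 h3 he2 he3 he4
  simp only [Pi.add_apply] at h2 h3 ⊢
  rw [h2, h3, he2, he3, he4, congrFun e1 ω]
  -- final algebra
  have hAsum : (∑ p : Fin n × Fin n, (d ω p.1 * d ω p.2) * (K * A p.1 p.2))
      = K * (d ω ⬝ᵥ A *ᵥ d ω) := by
    rw [Fintype.sum_prod_type]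
    have e1' : ∀ j, (∑ k, (d ω j * d ω k) * (K * A j k))
        = (K * d ω j) * ∑ k, A j k * d ω k := by
      intro j; rw [Finset.mul_sum]; exact Finset.sum_congr rfl fun k _ => by ring
    rw [Finset.sum_congr rfl fun j _ => e1' j]
    simp only [dotProduct, Matrix.mulVec]
    rw [Finset.mul_sum]
    exact Finset.sum_congr rfl fun j _ => by ring
  have husum : (∑ j, d ω j * (2*c^2 * u j)) = 2*c^2*(u ⬝ᵥ d ω) := by
    simp only [dotProduct]
    rw [Finset.mul_sum]
    exact Finset.sum_congr rfl fun j _ => by ring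
  rw [hAsum, husum]
  simp only [hd, hK]
  ring

/-- Exact one-step conditional second-moment recursion for SGD on linear regression
when all examples have squared norm exactly `M`. -/
theorem sgd_one_step_second_moment_recursion {n : ℕ}
    {Ω : Type*} [MeasurableSpace Ω] (μ : Measure Ω) [IsProbabilityMeasure μ]
    (x : ℕ → Ω → Fin n → ℝ) (y : ℕ → Ω → ℝ)
    (hxm : ∀ t : ℕ, Measurable (x t)) (hym : ∀ t : ℕ, Measurable (y t))
    (hyL2 : ∀ t : ℕ, MemLp (y t) 2 μ)
    (hindep : iIndepFun
      (fun t ω => (x t ω, y t ω)) μ)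
    (hident : ∀ t : ℕ, 1 ≤ t →
      IdentDistrib (fun ω => (x t ω, y t ω)) (fun ω => (x 1 ω, y 1 ω)) μ μ)
    (M : ℝ) (hM : 0 < M)
    (hnorm : ∀ t : ℕ, 1 ≤ t → ∀ᵐ ω ∂μ, x t ω ⬝ᵥ x t ω = M)
    (A : Matrix (Fin n) (Fin n) ℝ)
    (hA : ∀ i j, A i j = ∫ ω, x 1 ω i * x 1 ω j ∂μ)
    (hApd : A.PosDef)
    (b : Fin n → ℝ) (hb : ∀ i, b i = ∫ ω, x 1 ω i * y 1 ω ∂μ)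
    (θstar : Fin n → ℝ) (hθstar : θstar = A⁻¹ *ᵥ b)
    (S : Matrix (Fin n) (Fin n) ℝ)
    (hSdef : ∀ i j, S i j = ∫ ω,
      ((x 1 ω ⬝ᵥ θstar) * x 1 ω i - y 1 ω * x 1 ω i) *
        ((x 1 ω ⬝ᵥ θstar) * x 1 ω j - y 1 ω * x 1 ω j) ∂μ)
    (u : Fin n → ℝ)
    (hu : ∀ i, u i = ∫ ω,
      (x 1 ω ⬝ᵥ ((x 1 ω ⬝ᵥ θstar) • x 1 ω - y 1 ω • x 1 ω)) * x 1 ω i ∂μ)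
    (γ : ℕ → ℝ) (θ0 : Fin n → ℝ)
    (θ : ℕ → Ω → Fin n → ℝ)
    (hθ0 : ∀ ω, θ 0 ω = θ0)
    (hθrec : ∀ t : ℕ, 1 ≤ t → ∀ ω,
      θ t ω = θ (t - 1) ω - γ t • ((x t ω ⬝ᵥ θ (t - 1) ω) • x t ω - y t ω • x t ω)) :
    ∀ t : ℕ, 1 ≤ t →
      μ[fun ω => (θ t ω - θstar) ⬝ᵥ (θ t ω - θstar) |
          ⨆ i ∈ Finset.Icc 1 (t - 1),
            MeasurableSpace.comap (fun ω => (x i ω, y i ω)) inferInstance] =ᵐ[μ]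
        fun ω =>
          (θ (t - 1) ω - θstar) ⬝ᵥ (θ (t - 1) ω - θstar)
            - (2 * γ t - M * γ t ^ 2) *
                ((θ (t - 1) ω - θstar) ⬝ᵥ A *ᵥ (θ (t - 1) ω - θstar))
            + γ t ^ 2 * S.trace
            + 2 * γ t ^ 2 * (u ⬝ᵥ (θ (t - 1) ω - θstar)) := by
  rintro t ht
  obtain ⟨s, rfl⟩ : ∃ s, t = s + 1 := ⟨t - 1, by omega⟩
  simp only [Nat.add_sub_cancel]
  -- measurable space facts
  have hcomaple : ∀ i : ℕ, MeasurableSpace.comap (fun ω => (x i ω, y i ω))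
      inferInstance ≤ ‹MeasurableSpace Ω› :=
    fun i => measurable_iff_comap_le.mp ((hxm i).prodMk (hym i))
  have hle : (⨆ i ∈ Finset.Icc 1 s,
      MeasurableSpace.comap (fun ω => (x i ω, y i ω)) inferInstance) ≤ ‹MeasurableSpace Ω› :=
    iSup₂_le fun i _ => hcomaple i
  have hmzle : MeasurableSpace.comap (fun ω => (x (s+1) ω, y (s+1) ω)) inferInstance
      ≤ ‹MeasurableSpace Ω› := hcomaple (s+1)
  have hindep' : Indep
      (MeasurableSpace.comap (fun ω => (x (s+1) ω, y (s+1) ω)) inferInstance)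
      (⨆ i ∈ Finset.Icc 1 s,
        MeasurableSpace.comap (fun ω => (x i ω, y i ω)) inferInstance) μ := by
    have h := (iIndepFun_iff_iIndep _ _ _).mp hindep
    have hd : Disjoint ({s+1} : Set ℕ) (↑(Finset.Icc 1 s) : Set ℕ) := by
      simp only [Set.disjoint_left, Set.mem_singleton_iff]
      rintro a rfl ha
      simp only [Finset.coe_Icc, Set.mem_Icc] at ha
      omega
    have h2 := indep_iSup_of_disjoint hcomaple h hd
    simpa using h2
  have hpairmz : Measurable[MeasurableSpace.comap
      (fun ω => (x (s+1) ω, y (s+1) ω)) inferInstance]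
      (fun ω => (x (s+1) ω, y (s+1) ω)) := measurable_iff_comap_le.mpr le_rfl
  have hXmz : Measurable[MeasurableSpace.comap
      (fun ω => (x (s+1) ω, y (s+1) ω)) inferInstance] (x (s+1)) :=
    measurable_fst.comp hpairmz
  have hYmz : Measurable[MeasurableSpace.comap
      (fun ω => (x (s+1) ω, y (s+1) ω)) inferInstance] (y (s+1)) :=
    measurable_snd.comp hpairmz
  -- componentwise bounds
  have hxb : ∀ r : ℕ, 1 ≤ r → ∀ i, ∀ᵐ ω ∂μ, ‖x r ω i‖ ≤ Real.sqrt M := by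
    intro r hr i
    filter_upwards [hnorm r hr] with ω hω
    rw [Real.norm_eq_abs]
    apply Real.abs_le_sqrt
    rw [← hω]
    simp only [dotProduct, sq]
    exact Finset.single_le_sum (f := fun j => x r ω j * x r ω j)
      (fun j _ => mul_self_nonneg _) (Finset.mem_univ i)
  have hxij : ∀ r : ℕ, 1 ≤ r → ∀ i j, ∀ᵐ ω ∂μ,
      ‖x r ω i * x r ω j‖ ≤ Real.sqrt M * Real.sqrt M := by
    intro r hr i j
    filter_upwards [hxb r hr i, hxb r hr j] with ω h1 h2
    rw [norm_mul]
    exact mul_le_mul h1 h2 (norm_nonneg _) (Real.sqrt_nonneg M)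
  have hxiL2 : ∀ r : ℕ, 1 ≤ r → ∀ i, MemLp (fun ω => x r ω i) 2 μ := fun r hr i =>
    MemLp.of_bound ((measurable_pi_apply i).comp (hxm r)).aestronglyMeasurable _ (hxb r hr i)
  have hxijInt : ∀ r : ℕ, 1 ≤ r → ∀ i j, Integrable (fun ω => x r ω i * x r ω j) μ :=
    fun r hr i j => int_mul_of_L2 (hxiL2 r hr i) (hxiL2 r hr j)
  -- L2 of θ components
  have hθL2 : ∀ r : ℕ, ∀ i, MemLp (fun ω => θ r ω i) 2 μ := by
    intro r
    induction r with
    | zero =>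
      intro i
      have h0 : (fun ω => θ 0 ω i) = fun _ => θ0 i := funext fun ω => by rw [hθ0 ω]
      rw [h0]; exact memLp_const _
    | succ k ih =>
      intro i
      have hform : (fun ω => θ (k+1) ω i) = fun ω => θ k ω i
          - γ (k+1) * ((x (k+1) ω ⬝ᵥ θ k ω) * x (k+1) ω i - y (k+1) ω * x (k+1) ω i) := by
        funext ω
        rw [hθrec (k+1) (by omega) ω]
        simp [Nat.add_sub_cancel]
      rw [hform]
      have h1 : MemLp (fun ω => ∑ j, (x (k+1) ω j * x (k+1) ω i) * θ k ω j) 2 μ := by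
        refine memLp_finset_sum _ fun j _ => ?_
        exact memL2_bddmul (C := Real.sqrt M * Real.sqrt M)
          (((measurable_pi_apply j).comp (hxm (k+1))).mul
            ((measurable_pi_apply i).comp (hxm (k+1)))).aestronglyMeasurable
          (hxij (k+1) (by omega) j i) (ih j)
      have h1' : MemLp (fun ω => (x (k+1) ω ⬝ᵥ θ k ω) * x (k+1) ω i) 2 μ := by
        refine h1.ae_eq (Filter.Eventually.of_forall fun ω => ?_)
        simp only [dotProduct, Finset.sum_mul]
        exact Finset.sum_congr rfl fun j _ => by ring
      have h2 : MemLp (fun ω => y (k+1) ω * x (k+1) ω i) 2 μ := by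
        have := memL2_bddmul (C := Real.sqrt M)
          ((measurable_pi_apply i).comp (hxm (k+1))).aestronglyMeasurable
          (hxb (k+1) (by omega) i) (hyL2 (k+1))
        exact this.ae_eq (Filter.Eventually.of_forall fun ω => mul_comm _ _)
      exact (ih i).sub (((h1'.sub h2).const_mul _))
  -- 𝒢-measurability of θ r for r ≤ s
  have hθmeas : ∀ r : ℕ, r ≤ s → Measurable[⨆ i ∈ Finset.Icc 1 s,
      MeasurableSpace.comap (fun ω => (x i ω, y i ω)) inferInstance] (θ r) := by
    intro r
    induction r with
    | zero =>
      intro _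
      have h0 : θ 0 = fun _ => θ0 := funext hθ0
      rw [h0]; exact measurable_const
    | succ k ih =>
      intro hk
      have hθk := ih (by omega)
      have hcle : MeasurableSpace.comap (fun ω => (x (k+1) ω, y (k+1) ω)) inferInstance
          ≤ ⨆ i ∈ Finset.Icc 1 s,
            MeasurableSpace.comap (fun ω => (x i ω, y i ω)) inferInstance := by
        refine le_iSup₂ (f := fun (i : ℕ) (_ : i ∈ Finset.Icc 1 s) =>
          MeasurableSpace.comap (fun ω => (x i ω, y i ω)) inferInstance) (k+1) ?_
        simp only [Finset.mem_Icc]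
        omega
      have hpair : Measurable[MeasurableSpace.comap
          (fun ω => (x (k+1) ω, y (k+1) ω)) inferInstance]
          (fun ω => (x (k+1) ω, y (k+1) ω)) := measurable_iff_comap_le.mpr le_rfl
      have hX := (measurable_fst.comp hpair).mono hcle le_rfl
      have hY := (measurable_snd.comp hpair).mono hcle le_rfl
      have hform : θ (k+1) = fun ω => θ k ω
          - γ (k+1) • ((x (k+1) ω ⬝ᵥ θ k ω) • x (k+1) ω - y (k+1) ω • x (k+1) ω) := by
        funext ω
        rw [hθrec (k+1) (by omega) ω]
        simp [Nat.add_sub_cancel]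
      rw [hform]
      have hdot : Measurable[⨆ i ∈ Finset.Icc 1 s,
          MeasurableSpace.comap (fun ω => (x i ω, y i ω)) inferInstance]
          (fun ω => x (k+1) ω ⬝ᵥ θ k ω) := by
        have h : Measurable[⨆ i ∈ Finset.Icc 1 s,
            MeasurableSpace.comap (fun ω => (x i ω, y i ω)) inferInstance]
            (fun ω => ∑ j, x (k+1) ω j * θ k ω j) :=
          Finset.measurable_sum _ fun j _ =>
            ((measurable_pi_apply j).comp hX).mul ((measurable_pi_apply j).comp hθk)
        exact h
      refine measurable_pi_lambda' _ fun i => ?_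
      simp only [Pi.sub_apply, Pi.smul_apply, smul_eq_mul]
      exact ((measurable_pi_apply i).comp hθk).sub
        (((hdot.mul ((measurable_pi_apply i).comp hX)).sub
          (hY.mul ((measurable_pi_apply i).comp hX))).const_mul (γ (k+1)))
  -- transfers of moments from time s+1 to time 1
  have hident' := hident (s+1) (by omega)
  have hA' : ∀ j k, (∫ ω, x (s+1) ω j * x (s+1) ω k ∂μ) = A j k := by
    intro j k
    have hφ : Measurable (fun z : (Fin n → ℝ) × ℝ => z.1 j * z.1 k) :=
      ((measurable_pi_apply j).comp measurable_fst).mul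
        ((measurable_pi_apply k).comp measurable_fst)
    have h := (hident'.comp hφ).integral_eq
    have h2 : (∫ ω, x (s+1) ω j * x (s+1) ω k ∂μ) = ∫ ω, x 1 ω j * x 1 ω k ∂μ := by
      simpa [Function.comp] using h
    rw [h2, ← hA j k]
  have hAsymm : ∀ j k, A j k = A k j := by
    intro j k
    rw [hA j k, hA k j]
    exact integral_congr_ae (Filter.Eventually.of_forall fun ω => mul_comm _ _)
  have hAb : A *ᵥ θstar = b := by
    rw [hθstar, Matrix.mulVec_mulVec,
      Matrix.mul_nonsing_inv A (isUnit_iff_ne_zero.mpr hApd.det_pos.ne'),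
      Matrix.one_mulVec]
  -- measurability of the dot-product maps on the product space
  have hφdotθ : Measurable (fun z : (Fin n → ℝ) × ℝ => z.1 ⬝ᵥ θstar) := by
    have h : Measurable (fun z : (Fin n → ℝ) × ℝ => ∑ k, z.1 k * θstar k) :=
      Finset.measurable_sum _ fun k _ =>
        ((measurable_pi_apply k).comp measurable_fst).mul measurable_const
    exact h
  have hφξ : ∀ j, Measurable (fun z : (Fin n → ℝ) × ℝ =>
      (z.1 ⬝ᵥ θstar) * z.1 j - z.2 * z.1 j) := fun j =>
    (hφdotθ.mul ((measurable_pi_apply j).comp measurable_fst)).sub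
      (measurable_snd.mul ((measurable_pi_apply j).comp measurable_fst))
  -- L2 facts at time 1 for ξ components
  have hdotb1 : ∀ᵐ ω ∂μ, ‖x 1 ω ⬝ᵥ θstar‖ ≤ Real.sqrt M * ∑ k, ‖θstar k‖ := by
    have hall := ae_all_iff.mpr (hxb 1 le_rfl)
    filter_upwards [hall] with ω hω
    calc ‖x 1 ω ⬝ᵥ θstar‖ ≤ ∑ k, ‖x 1 ω k * θstar k‖ := norm_sum_le _ _
    _ ≤ ∑ k, Real.sqrt M * ‖θstar k‖ := by
        refine Finset.sum_le_sum fun k _ => ?_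
        rw [norm_mul]
        exact mul_le_mul_of_nonneg_right (hω k) (norm_nonneg _)
    _ = Real.sqrt M * ∑ k, ‖θstar k‖ := by rw [Finset.mul_sum]
  have hdotm1 : Measurable (fun ω => x 1 ω ⬝ᵥ θstar) := by
    have h : Measurable (fun ω => ∑ k, x 1 ω k * θstar k) :=
      Finset.measurable_sum _ fun k _ =>
        ((measurable_pi_apply k).comp (hxm 1)).mul measurable_const
    exact h
  have hξ1L2 : ∀ i, MemLp (fun ω => (x 1 ω ⬝ᵥ θstar) * x 1 ω i - y 1 ω * x 1 ω i) 2 μ := by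
    intro i
    have h1 : MemLp (fun ω => (x 1 ω ⬝ᵥ θstar) * x 1 ω i) 2 μ :=
      memL2_bddmul hdotm1.aestronglyMeasurable hdotb1 (hxiL2 1 le_rfl i)
    have h2 : MemLp (fun ω => y 1 ω * x 1 ω i) 2 μ := by
      have := memL2_bddmul (C := Real.sqrt M)
        ((measurable_pi_apply i).comp (hxm 1)).aestronglyMeasurable
        (hxb 1 le_rfl i) (hyL2 1)
      exact this.ae_eq (Filter.Eventually.of_forall fun ω => mul_comm _ _)
    exact h1.sub h2
  -- ∫ ξ₁ = 0
  have hξzero1 : ∀ j, (∫ ω, ((x 1 ω ⬝ᵥ θstar) * x 1 ω j - y 1 ω * x 1 ω j) ∂μ) = 0 := by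
    intro j
    have hint1 : Integrable (fun ω => (x 1 ω ⬝ᵥ θstar) * x 1 ω j) μ :=
      (memL2_bddmul hdotm1.aestronglyMeasurable hdotb1 (hxiL2 1 le_rfl j)).integrable one_le_two
    have hint2 : Integrable (fun ω => y 1 ω * x 1 ω j) μ := by
      have := int_mul_of_L2 (hyL2 1) (hxiL2 1 le_rfl j)
      exact this
    rw [integral_sub hint1 hint2]
    have hterm1 : (∫ ω, (x 1 ω ⬝ᵥ θstar) * x 1 ω j ∂μ) = (A *ᵥ θstar) j := by
      have hrw : (fun ω => (x 1 ω ⬝ᵥ θstar) * x 1 ω j)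
          = fun ω => ∑ k, θstar k * (x 1 ω k * x 1 ω j) := by
        funext ω
        simp only [dotProduct, Finset.sum_mul]
        exact Finset.sum_congr rfl fun k _ => by ring
      rw [hrw, integral_finset_sum _ fun k _ => (hxijInt 1 le_rfl k j).const_mul _]
      simp only [Matrix.mulVec, dotProduct]
      refine Finset.sum_congr rfl fun k _ => ?_
      rw [integral_const_mul, ← hA k j, hAsymm j k]
      ring
    have hterm2 : (∫ ω, y 1 ω * x 1 ω j ∂μ) = b j := by
      rw [hb j]
      exact integral_congr_ae (Filter.Eventually.of_forall fun ω => mul_comm _ _)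
    rw [hterm1, hterm2, hAb]
    ring
  -- transferred hypotheses for aux
  have hξ0' : ∀ j, (∫ ω, ((x (s+1) ω ⬝ᵥ θstar) * x (s+1) ω j
      - y (s+1) ω * x (s+1) ω j) ∂μ) = 0 := by
    intro j
    have h := (hident'.comp (hφξ j)).integral_eq
    have h2 : (∫ ω, ((x (s+1) ω ⬝ᵥ θstar) * x (s+1) ω j - y (s+1) ω * x (s+1) ω j) ∂μ)
        = ∫ ω, ((x 1 ω ⬝ᵥ θstar) * x 1 ω j - y 1 ω * x 1 ω j) ∂μ := by
      simpa [Function.comp] using h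
    rw [h2, hξzero1 j]
  have hφu : ∀ j, Measurable (fun z : (Fin n → ℝ) × ℝ =>
      (z.1 ⬝ᵥ ((z.1 ⬝ᵥ θstar) • z.1 - z.2 • z.1)) * z.1 j) := by
    intro j
    have hdot : Measurable (fun z : (Fin n → ℝ) × ℝ =>
        z.1 ⬝ᵥ ((z.1 ⬝ᵥ θstar) • z.1 - z.2 • z.1)) := by
      have h : Measurable (fun z : (Fin n → ℝ) × ℝ =>
          ∑ k, z.1 k * ((z.1 ⬝ᵥ θstar) • z.1 - z.2 • z.1) k) := by
        refine Finset.measurable_sum _ fun k _ => ?_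
        refine ((measurable_pi_apply k).comp measurable_fst).mul ?_
        simp only [Pi.sub_apply, Pi.smul_apply, smul_eq_mul]
        exact (hφdotθ.mul ((measurable_pi_apply k).comp measurable_fst)).sub
          (measurable_snd.mul ((measurable_pi_apply k).comp measurable_fst))
      exact h
    exact hdot.mul ((measurable_pi_apply j).comp measurable_fst)
  have hu' : ∀ j, (∫ ω, (x (s+1) ω ⬝ᵥ ((x (s+1) ω ⬝ᵥ θstar) • x (s+1) ω
      - y (s+1) ω • x (s+1) ω)) * x (s+1) ω j ∂μ) = u j := by
    intro j
    have h := (hident'.comp (hφu j)).integral_eq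
    have h2 : (∫ ω, (x (s+1) ω ⬝ᵥ ((x (s+1) ω ⬝ᵥ θstar) • x (s+1) ω
        - y (s+1) ω • x (s+1) ω)) * x (s+1) ω j ∂μ)
        = ∫ ω, (x 1 ω ⬝ᵥ ((x 1 ω ⬝ᵥ θstar) • x 1 ω - y 1 ω • x 1 ω)) * x 1 ω j ∂μ := by
      simpa [Function.comp] using h
    rw [h2, ← hu j]
  have hφS : Measurable (fun z : (Fin n → ℝ) × ℝ =>
      ((z.1 ⬝ᵥ θstar) • z.1 - z.2 • z.1) ⬝ᵥ ((z.1 ⬝ᵥ θstar) • z.1 - z.2 • z.1)) := by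
    have h : Measurable (fun z : (Fin n → ℝ) × ℝ =>
        ∑ k, ((z.1 ⬝ᵥ θstar) • z.1 - z.2 • z.1) k * ((z.1 ⬝ᵥ θstar) • z.1 - z.2 • z.1) k) := by
      refine Finset.measurable_sum _ fun k _ => ?_
      have hk : Measurable (fun z : (Fin n → ℝ) × ℝ =>
          ((z.1 ⬝ᵥ θstar) • z.1 - z.2 • z.1) k) := by
        simp only [Pi.sub_apply, Pi.smul_apply, smul_eq_mul]
        exact (hφdotθ.mul ((measurable_pi_apply k).comp measurable_fst)).sub
          (measurable_snd.mul ((measurable_pi_apply k).comp measurable_fst))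
      exact hk.mul hk
    exact h
  have hξξ1 : (∫ ω, ((x 1 ω ⬝ᵥ θstar) • x 1 ω - y 1 ω • x 1 ω) ⬝ᵥ
      ((x 1 ω ⬝ᵥ θstar) • x 1 ω - y 1 ω • x 1 ω) ∂μ) = S.trace := by
    have hrw : (fun ω => ((x 1 ω ⬝ᵥ θstar) • x 1 ω - y 1 ω • x 1 ω) ⬝ᵥ
        ((x 1 ω ⬝ᵥ θstar) • x 1 ω - y 1 ω • x 1 ω))
        = fun ω => ∑ i, ((x 1 ω ⬝ᵥ θstar) * x 1 ω i - y 1 ω * x 1 ω i) *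
            ((x 1 ω ⬝ᵥ θstar) * x 1 ω i - y 1 ω * x 1 ω i) := by
      funext ω
      simp only [dotProduct, Pi.sub_apply, Pi.smul_apply, smul_eq_mul]
    rw [hrw, integral_finset_sum _ fun i _ => int_mul_of_L2 (hξ1L2 i) (hξ1L2 i)]
    rw [Matrix.trace]
    refine Finset.sum_congr rfl fun i _ => ?_
    rw [Matrix.diag_apply, hSdef i i]
  have hξξ' : (∫ ω, ((x (s+1) ω ⬝ᵥ θstar) • x (s+1) ω - y (s+1) ω • x (s+1) ω) ⬝ᵥ
      ((x (s+1) ω ⬝ᵥ θstar) • x (s+1) ω - y (s+1) ω • x (s+1) ω) ∂μ) = S.trace := by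
    have h := (hident'.comp hφS).integral_eq
    have h2 : (∫ ω, ((x (s+1) ω ⬝ᵥ θstar) • x (s+1) ω - y (s+1) ω • x (s+1) ω) ⬝ᵥ
        ((x (s+1) ω ⬝ᵥ θstar) • x (s+1) ω - y (s+1) ω • x (s+1) ω) ∂μ)
        = ∫ ω, ((x 1 ω ⬝ᵥ θstar) • x 1 ω - y 1 ω • x 1 ω) ⬝ᵥ
            ((x 1 ω ⬝ᵥ θstar) • x 1 ω - y 1 ω • x 1 ω) ∂μ := by
      simpa [Function.comp] using h
    rw [h2, hξξ1]
  -- rewrite the goal function using the recursion and apply the aux lemma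
  have hgoalfun : (fun ω => (θ (s+1) ω - θstar) ⬝ᵥ (θ (s+1) ω - θstar))
      = fun ω => ((θ s ω - γ (s+1) • ((x (s+1) ω ⬝ᵥ θ s ω) • x (s+1) ω
          - y (s+1) ω • x (s+1) ω)) - θstar) ⬝ᵥ
        ((θ s ω - γ (s+1) • ((x (s+1) ω ⬝ᵥ θ s ω) • x (s+1) ω
          - y (s+1) ω • x (s+1) ω)) - θstar) := by
    funext ω
    rw [hθrec (s+1) (by omega) ω]
    simp [Nat.add_sub_cancel]
  rw [hgoalfun]
  exact sgd_aux hle hmzle hindep' (x (s+1)) (y (s+1)) hXmz hYmz (hyL2 (s+1)) M hM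
    (hnorm (s+1) (by omega)) (θ s) (hθmeas s le_rfl) (hθL2 s) θstar (γ (s+1))
    A hA' u hu' hξ0' S.trace hξξ'
end
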